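/- arXiv:1802.07458 — 5 statements merged into one kernel-verified Lean document; each statement's English description precedes it below -/
import Mathlib

section
/- Let A ∈ 𝒜, B ∈ ℬ, C ∈ 𝒞 be arbitrary random variables on finite or countably infinite sets, and let B̃ ∈ ℬ, C̃ ∈ 𝒞 be random variables such that the pair (B̃, C̃) is independent of A. Let ψ₁ : 𝒜×ℬ → [0,1] and α₁ ∈ [0,1] satisfy P_A(a) P_{B̃}(b) ≥ α₁ ψ₁(a,b) P_{AB}(a,b) for all (a,b), and let ψ₂ : 𝒜×ℬ×𝒞 → [0,1] and α₂ ∈ [0,1] satisfy P_{AB}(a,b) P_{C̃|B̃}(c|b) ≥ α₂ ψ₂(a,b,c) P_{ABC}(a,b,c) for all (a,b,c). Then for any set ℱ ⊆ 𝒜×ℬ×𝒞 and any integers M₁, M₂ ≥ 1, E[ E[ E[ 𝟙{(A,B̃,C̃) ∉ ℱ} | A, B̃ ]^{M₂} | A ]^{M₁} ] ≤ 1 − E[ψ₁(A,B) ψ₂(A,B,C)] + Pr{(A,B,C) ∉ ℱ} + e^{−α₂ M₂ − log α₁} + e^{−α₁ M₁}. -/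
open scoped BigOperators
open Filter Topology

noncomputable section

/-- `p` is a probability mass function on `α`. -/
def IsPmf {α : Type*} (p : α → ℝ) : Prop :=
  (∀ a, 0 ≤ p a) ∧ HasSum p 1

/-- Probability of the set `S` under the pmf `p`. -/
def prS {α : Type*} (p : α → ℝ) (S : Set α) : ℝ :=
  ∑' a, Set.indicator S p a

/-- Smooth max Rényi divergence `D_∞^δ(P‖Q)`. -/
def Dinf {α : Type*} (P Q : α → ℝ) (δ : ℝ) : ℝ :=
  sInf { d : ℝ | ∃ ψ : α → ℝ, (∀ a, 0 ≤ ψ a ∧ ψ a ≤ 1) ∧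
    1 - δ ≤ ∑' a, ψ a * P a ∧
    d = max 0 (Real.log (⨆ a, ψ a * P a / Q a)) }

def margFst {α β : Type*} (π : α × β → ℝ) : α → ℝ := fun a => ∑' b, π (a, b)

def margSnd {α β : Type*} (π : α × β → ℝ) : β → ℝ := fun b => ∑' a, π (a, b)

/-- `I_∞^δ(A;B)` for a joint pmf `π` of the pair `(A,B)`:
`D_∞^δ(P_{AB} ‖ P_A × P_B)`. -/
def Iinf {α β : Type*} (π : α × β → ℝ) (δ : ℝ) : ℝ :=
  Dinf π (fun x => margFst π x.1 * margSnd π x.2) δ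

/-- `I_∞^δ(A;B|C)` for a joint pmf `π` of the triple `(A,B,C)`:
`D_∞^δ(P_{ABC} ‖ P_{AC} × P_{B|C})`. -/
def IinfCond {α β γ : Type*} (π : α × β × γ → ℝ) (δ : ℝ) : ℝ :=
  Dinf π (fun x => (∑' b, π (x.1, b, x.2.2)) *
    ((∑' a, π (a, x.2.1, x.2.2)) / (∑' a, ∑' b, π (a, b, x.2.2)))) δ

/-- The set whose infimum defines the limsup in probability. -/
def pLimsupSet {ι : ℕ → Type*} (p : ∀ n, ι n → ℝ) (S : ∀ n, ι n → ℝ) : Set ℝ :=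
  { c : ℝ | Tendsto (fun n => prS (p n) { w | c < S n w }) atTop (𝓝 0) }

/-- Limsup in probability of the sequence of random variables `S n`, the `n`-th
sample being distributed according to the pmf `p n`. -/
def pLimsup {ι : ℕ → Type*} (p : ∀ n, ι n → ℝ) (S : ∀ n, ι n → ℝ) : ℝ :=
  sInf (pLimsupSet p S)

def specSupMISet {A B : ℕ → Type*} (π : ∀ n, A n × B n → ℝ) : Set ℝ :=
  pLimsupSet π (fun n x =>
    (1 / (n : ℝ)) * Real.log ((π n x / margFst (π n) x.1) / margSnd (π n) x.2))

/-- Spectral sup-mutual information rate `Ī(A;B)` of a sequence of joint pmfs. -/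
def specSupMI {A B : ℕ → Type*} (π : ∀ n, A n × B n → ℝ) : ℝ :=
  sInf (specSupMISet π)

def specSupCMISet {A B C : ℕ → Type*} (π : ∀ n, A n × B n × C n → ℝ) : Set ℝ :=
  pLimsupSet π (fun n x =>
    (1 / (n : ℝ)) * Real.log (
      (π n x / (∑' b, π n (x.1, b, x.2.2))) /
      ((∑' a, π n (a, x.2.1, x.2.2)) / (∑' a, ∑' b, π n (a, b, x.2.2)))))

/-- Conditional spectral sup-mutual information rate `Ī(A;B|C)`. -/
def specSupCMI {A B C : ℕ → Type*} (π : ∀ n, A n × B n × C n → ℝ) : ℝ :=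
  sInf (specSupCMISet π)

/-- A code for the (one-shot) successive refinement problem. -/
structure SRCode (𝒳 𝒴 𝒵 : Type*) (M₁ M₂ : ℕ) where
  f₁ : 𝒳 → Fin M₁
  f₂ : 𝒳 → Fin M₂
  φ₁ : Fin M₁ → 𝒴
  φ₂ : Fin M₁ → Fin M₂ → 𝒵

/-- `((M₁,M₂),(D₁,D₂))` is `(ε₁,ε₂)`-achievable. -/
def EpsAchievable {𝒳 𝒴 𝒵 : Type*} (pX : 𝒳 → ℝ)
    (d₁ : 𝒳 → 𝒴 → ℝ) (d₂ : 𝒳 → 𝒵 → ℝ)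
    (D₁ D₂ ε₁ ε₂ : ℝ) (M₁ M₂ : ℕ) : Prop :=
  ∃ C : SRCode 𝒳 𝒴 𝒵 M₁ M₂,
    prS pX { x | D₁ < d₁ x (C.φ₁ (C.f₁ x)) } ≤ ε₁ ∧
    prS pX { x | D₂ < d₂ x (C.φ₂ (C.f₁ x) (C.f₂ x)) } ≤ ε₂

/-- The set `𝓜(D,ε|X)` of pairs of numbers of codewords. -/
def MSet {𝒳 𝒴 𝒵 : Type*} (pX : 𝒳 → ℝ)
    (d₁ : 𝒳 → 𝒴 → ℝ) (d₂ : 𝒳 → 𝒵 → ℝ) (D₁ D₂ ε₁ ε₂ : ℝ) : Set (ℕ × ℕ) :=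
  { m | 0 < m.1 ∧ 0 < m.2 ∧ EpsAchievable pX d₁ d₂ D₁ D₂ ε₁ ε₂ m.1 m.2 }

/-- A sequence of codes for the successive refinement problem. -/
structure SRCodeSeq (𝒳 𝒴 𝒵 : ℕ → Type*) where
  M₁ : ℕ → ℕ
  M₂ : ℕ → ℕ
  hM₁ : ∀ n, 0 < M₁ n
  hM₂ : ∀ n, 0 < M₂ n
  f₁ : ∀ n, 𝒳 n → Fin (M₁ n)
  f₂ : ∀ n, 𝒳 n → Fin (M₂ n)
  φ₁ : ∀ n, Fin (M₁ n) → 𝒴 n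
  φ₂ : ∀ n, Fin (M₁ n) → Fin (M₂ n) → 𝒵 n

/-- `(R,D)` is fm-achievable for the general source `pX`. -/
def FmAchievable {𝒳 𝒴 𝒵 : ℕ → Type*} (pX : ∀ n, 𝒳 n → ℝ)
    (d₁ : ∀ n, 𝒳 n → 𝒴 n → ℝ) (d₂ : ∀ n, 𝒳 n → 𝒵 n → ℝ)
    (R₁ R₂ D₁ D₂ : ℝ) : Prop :=
  ∃ C : SRCodeSeq 𝒳 𝒴 𝒵,
    pLimsup pX (fun n x => d₁ n x (C.φ₁ n (C.f₁ n x))) ≤ D₁ ∧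
    pLimsup pX (fun n x => d₂ n x (C.φ₂ n (C.f₁ n x) (C.f₂ n x))) ≤ D₂ ∧
    Filter.limsup (fun n : ℕ => (1 / (n : ℝ)) * Real.log (C.M₁ n)) atTop ≤ R₁ ∧
    Filter.limsup (fun n : ℕ => (1 / (n : ℝ)) * Real.log (C.M₂ n)) atTop ≤ R₂

/-- The rate-distortion region `𝓡(D|𝐗)`. -/
def RDRegion {𝒳 𝒴 𝒵 : ℕ → Type*} (pX : ∀ n, 𝒳 n → ℝ)
    (d₁ : ∀ n, 𝒳 n → 𝒴 n → ℝ) (d₂ : ∀ n, 𝒳 n → 𝒵 n → ℝ)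
    (D₁ D₂ : ℝ) : Set (ℝ × ℝ) :=
  { R | 0 ≤ R.1 ∧ 0 ≤ R.2 ∧ FmAchievable pX d₁ d₂ R.1 R.2 D₁ D₂ }

/-- Shannon mutual information of a joint pmf. -/
def mutualInfo {α β : Type*} (π : α × β → ℝ) : ℝ :=
  ∑' x : α × β, π x * Real.log (π x / (margFst π x.1 * margSnd π x.2))


/-! ### Auxiliary definitions and lemmas for the covering lemma bound -/

private def pab {α β γ : Type*} (π : α × β × γ → ℝ) (a : α) (b : β) : ℝ :=
  ∑' c, π (a, b, c)

private def pa {α β γ : Type*} (π : α × β × γ → ℝ) (a : α) : ℝ :=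
  ∑' b, pab π a b

private def gfun {α β γ : Type*} (r : β → γ → ℝ) (F : Set (α × β × γ))
    (a : α) (b : β) : ℝ :=
  ∑' c : {c : γ // (a, b, c) ∉ F}, r b c.val

private def sfun {α β γ : Type*} (π : α × β × γ → ℝ) (ψ₂ : α × β × γ → ℝ)
    (F : Set (α × β × γ)) (a : α) (b : β) : ℝ :=
  ∑' c : {c : γ // (a, b, c) ∈ F}, ψ₂ (a, b, c.val) * π (a, b, c.val)

private lemma key_pow_bound (x t s : ℝ) (M : ℕ) (hx0 : 0 ≤ x) (hxt : x ≤ 1 - s * t)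
    (ht0 : 0 ≤ t) (ht1 : t ≤ 1) :
    x ^ M ≤ 1 - t + Real.exp (-(s * M)) := by
  have h1 : x ^ M ≤ Real.exp (-(s * t)) ^ M := by
    apply pow_le_pow_left₀ hx0
    have := Real.add_one_le_exp (-(s * t))
    linarith
  have h2 : Real.exp (-(s * t)) ^ M = Real.exp ((M : ℝ) * -(s * t)) :=
    (Real.exp_nat_mul _ M).symm
  have h3 : Real.exp ((M : ℝ) * -(s * t)) ≤ (1 - t) * 1 + t * Real.exp (-(s * M)) := by
    have hc := convexOn_exp.2 (Set.mem_univ (0 : ℝ)) (Set.mem_univ (-(s * M)))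
      (by linarith : (0:ℝ) ≤ 1 - t) ht0 (by ring)
    simp only [smul_eq_mul, mul_zero, zero_add, Real.exp_zero] at hc
    calc Real.exp ((M : ℝ) * -(s * t)) = Real.exp ((1 - t) * 0 + t * -(s * M)) := by ring_nf
      _ ≤ (1 - t) * 1 + t * Real.exp (-(s * M)) := by
          have h' : (1 - t) * 0 + t * -(s * ↑M) = t * -(s * ↑M) := by ring
          rw [h']
          simpa using hc
  have h4 : t * Real.exp (-(s * M)) ≤ Real.exp (-(s * M)) := by
    nlinarith [Real.exp_pos (-(s * M)), ht1]
  calc x ^ M ≤ Real.exp (-(s*t)) ^ M := h1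
    _ = Real.exp ((M:ℝ) * -(s*t)) := h2
    _ ≤ (1 - t) * 1 + t * Real.exp (-(s*M)) := h3
    _ ≤ 1 - t + Real.exp (-(s*M)) := by linarith

private lemma tsum_subtype_le_real {β : Type*} (f : β → ℝ) (s : Set β)
    (h0 : ∀ x, 0 ≤ f x) (hf : Summable f) : (∑' x : s, f x) ≤ ∑' x, f x := by
  rw [tsum_subtype]
  exact Summable.tsum_le_tsum (fun x => (Set.indicator_le_self' (fun x _ => h0 x)) x)
    (hf.indicator s) hf

/-- Lemma 2, bound for the covering lemma.
Here `π` is the joint pmf of `(A,B,C)`, `q` is the pmf of `B̃` and `r b` is the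
conditional pmf of `C̃` given `B̃ = b` (so that `(B̃,C̃)` is independent of `A`).
`∑' b, ∑' c, π (a, b, c)` is `P_A(a)` and `∑' c, π (a, b, c)` is `P_{AB}(a,b)`. -/
theorem covering_lemma_bound {α β γ : Type*}
    [Countable α] [Countable β] [Countable γ]
    (π : α × β × γ → ℝ) (hπ : IsPmf π)
    (q : β → ℝ) (r : β → γ → ℝ) (hq : IsPmf q) (hr : ∀ b, IsPmf (r b))
    (ψ₁ : α × β → ℝ) (hψ₁ : ∀ x, 0 ≤ ψ₁ x ∧ ψ₁ x ≤ 1)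
    (ψ₂ : α × β × γ → ℝ) (hψ₂ : ∀ x, 0 ≤ ψ₂ x ∧ ψ₂ x ≤ 1)
    (α₁ α₂ : ℝ) (hα₁ : α₁ ∈ Set.Icc (0:ℝ) 1) (hα₂ : α₂ ∈ Set.Icc (0:ℝ) 1)
    (h₁ : ∀ a b, α₁ * ψ₁ (a, b) * (∑' c, π (a, b, c)) ≤
      (∑' b', ∑' c', π (a, b', c')) * q b)
    (h₂ : ∀ a b c, α₂ * ψ₂ (a, b, c) * π (a, b, c) ≤
      (∑' c', π (a, b, c')) * r b c)
    (F : Set (α × β × γ)) (M₁ M₂ : ℕ) (hM₁ : 1 ≤ M₁) (hM₂ : 1 ≤ M₂) :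
    (∑' a, (∑' b', ∑' c', π (a, b', c')) *
        (∑' b, q b * (∑' c : {c : γ // (a, b, c) ∉ F}, r b c.val) ^ M₂) ^ M₁) ≤
    1 - (∑' x, π x * (ψ₁ (x.1, x.2.1) * ψ₂ x)) + prS π {x | x ∉ F}
      + Real.exp (-α₂ * M₂ - Real.log α₁) + Real.exp (-α₁ * M₁) := by
  obtain ⟨hπ0, hπhs⟩ := hπ
  have hπs : Summable π := hπhs.summable
  obtain ⟨hq0, hqhs⟩ := hq
  have hqs : Summable q := hqhs.summable
  have hq1 : ∑' b, q b = 1 := hqhs.tsum_eq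
  have hr0 : ∀ b c, 0 ≤ r b c := fun b => (hr b).1
  have hrs : ∀ b, Summable (r b) := fun b => (hr b).2.summable
  have hr1 : ∀ b, ∑' c, r b c = 1 := fun b => (hr b).2.tsum_eq
  obtain ⟨hα₁0, hα₁1⟩ := hα₁
  obtain ⟨hα₂0, hα₂1⟩ := hα₂
  have hsum_bc : ∀ a, Summable (fun y : β × γ => π (a, y)) := fun a =>
    hπs.comp_injective (fun y₁ y₂ h => by simpa using h)
  have hsum_c : ∀ a b, Summable (fun c : γ => π (a, b, c)) := fun a b =>
    hπs.comp_injective (fun c₁ c₂ h => by simpa using h)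
  have hPAB0 : ∀ a b, 0 ≤ pab π a b := fun a b => tsum_nonneg fun c => hπ0 _
  have hPABs : ∀ a, Summable (pab π a) := fun a =>
    ((summable_prod_of_nonneg (fun y => hπ0 _)).mp (hsum_bc a)).2
  have hPA0 : ∀ a, 0 ≤ pa π a := fun a => tsum_nonneg fun b => hPAB0 a b
  have hPAs : Summable (pa π) := by
    have h := ((summable_prod_of_nonneg (fun x => hπ0 x)).mp hπs).2
    exact h.congr fun a => Summable.tsum_prod' (hsum_bc a) (fun b => hsum_c a b)
  have hPA1 : ∑' a, pa π a = 1 := by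
    calc ∑' a, pa π a = ∑' a, ∑' y : β × γ, π (a, y) :=
          tsum_congr fun a => (Summable.tsum_prod' (hsum_bc a) (fun b => hsum_c a b)).symm
      _ = ∑' p, π p := (Summable.tsum_prod' hπs hsum_bc).symm
      _ = 1 := hπhs.tsum_eq
  have hg0 : ∀ a b, 0 ≤ gfun r F a b := fun a b => tsum_nonneg fun c => hr0 b _
  have hg1 : ∀ a b, gfun r F a b ≤ 1 := by
    intro a b
    have h := tsum_subtype_le_real (r b) {c | (a, b, c) ∉ F} (hr0 b) (hrs b)
    rw [hr1 b] at h
    exact h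
  have hgM : ∀ a b, gfun r F a b ^ M₂ ≤ 1 := fun a b => pow_le_one₀ (hg0 a b) (hg1 a b)
  have hgM0 : ∀ a b, 0 ≤ gfun r F a b ^ M₂ := fun a b => pow_nonneg (hg0 a b) M₂
  have hψ₂π_s : ∀ a b, Summable (fun c => ψ₂ (a, b, c) * π (a, b, c)) := fun a b =>
    Summable.of_nonneg_of_le (fun c => mul_nonneg (hψ₂ _).1 (hπ0 _))
      (fun c => mul_le_of_le_one_left (hπ0 _) (hψ₂ _).2) (hsum_c a b)
  have hS0 : ∀ a b, 0 ≤ sfun π ψ₂ F a b := fun a b =>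
    tsum_nonneg fun c => mul_nonneg (hψ₂ _).1 (hπ0 _)
  have hSle : ∀ a b, sfun π ψ₂ F a b ≤ pab π a b := by
    intro a b
    have h1 : sfun π ψ₂ F a b ≤ ∑' c : {c : γ // (a, b, c) ∈ F}, π (a, b, c.val) :=
      Summable.tsum_le_tsum (fun c => mul_le_of_le_one_left (hπ0 _) (hψ₂ _).2)
        ((hψ₂π_s a b).comp_injective Subtype.val_injective)
        ((hsum_c a b).comp_injective Subtype.val_injective)
    have h2 := tsum_subtype_le_real (fun c => π (a, b, c)) {c | (a, b, c) ∈ F}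
      (fun c => hπ0 _) (hsum_c a b)
    exact h1.trans h2
  -- Claim 1 : pointwise bound in (a, b)
  have claim1 : ∀ a b, sfun π ψ₂ F a b - pab π a b * Real.exp (-(α₂ * M₂)) ≤
      pab π a b * (1 - gfun r F a b ^ M₂) := by
    intro a b
    rcases eq_or_lt_of_le (hPAB0 a b) with h0 | hpos
    · have hz : ∀ c, π (a, b, c) = 0 := by
        intro c
        have hle := Summable.le_tsum (hsum_c a b) c (fun j _ => hπ0 _)
        have heq : (∑' c, π (a, b, c)) = pab π a b := rfl
        have := hπ0 (a, b, c)
        linarith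
      have hSz : sfun π ψ₂ F a b = 0 := by
        have hz' : ∀ c : {c : γ // (a, b, c) ∈ F},
            ψ₂ (a, b, c.val) * π (a, b, c.val) = (0:ℝ) := fun c => by rw [hz]; ring
        calc sfun π ψ₂ F a b = ∑' c : {c : γ // (a, b, c) ∈ F}, (0:ℝ) := tsum_congr hz'
          _ = 0 := tsum_zero
      rw [hSz, ← h0]
      simp
    · have hsubF : Summable (fun c : {c : γ // (a, b, c) ∈ F} =>
          ψ₂ (a, b, c.val) * π (a, b, c.val)) :=
        (hψ₂π_s a b).comp_injective Subtype.val_injective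
      have hrsubF : Summable (fun c : {c : γ // (a, b, c) ∈ F} => r b c.val) :=
        (hrs b).comp_injective Subtype.val_injective
      have hsplit : (∑' c : {c : γ // (a, b, c) ∈ F}, r b c.val) + gfun r F a b = 1 := by
        have h := Summable.tsum_add_tsum_compl (s := {c : γ | (a, b, c) ∈ F}) (f := r b)
          ((hrs b).comp_injective Subtype.val_injective)
          ((hrs b).comp_injective Subtype.val_injective)
        rw [hr1 b] at h
        exact h
      have hmul : α₂ * sfun π ψ₂ F a b ≤
          pab π a b * ∑' c : {c : γ // (a, b, c) ∈ F}, r b c.val := by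
        show α₂ * (∑' c : {c : γ // (a, b, c) ∈ F}, ψ₂ (a, b, c.val) * π (a, b, c.val)) ≤ _
        rw [← tsum_mul_left, ← tsum_mul_left]
        refine Summable.tsum_le_tsum (fun c => ?_) (hsubF.mul_left α₂) (hrsubF.mul_left (pab π a b))
        calc α₂ * (ψ₂ (a, b, c.val) * π (a, b, c.val))
            = α₂ * ψ₂ (a, b, c.val) * π (a, b, c.val) := by ring
          _ ≤ (∑' c', π (a, b, c')) * r b c.val := h₂ a b c.val
          _ = pab π a b * r b c.val := rfl
      have hrF : α₂ * (sfun π ψ₂ F a b / pab π a b) ≤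
          ∑' c : {c : γ // (a, b, c) ∈ F}, r b c.val := by
        rw [mul_div_assoc', div_le_iff₀ hpos]
        nlinarith [hmul]
      have hgle : gfun r F a b ≤ 1 - α₂ * (sfun π ψ₂ F a b / pab π a b) := by
        linarith
      have hkey := key_pow_bound (gfun r F a b) (sfun π ψ₂ F a b / pab π a b) α₂ M₂
        (hg0 a b) hgle (div_nonneg (hS0 a b) (hPAB0 a b)) ((div_le_one hpos).mpr (hSle a b))
      have hPt : pab π a b * (sfun π ψ₂ F a b / pab π a b) = sfun π ψ₂ F a b := by
        field_simp
      nlinarith [mul_le_mul_of_nonneg_left hkey (hPAB0 a b), hPt]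
  -- inner sums
  have hinner_s : ∀ a, Summable (fun b => q b * gfun r F a b ^ M₂) := fun a =>
    Summable.of_nonneg_of_le (fun b => mul_nonneg (hq0 b) (hgM0 a b))
      (fun b => mul_le_of_le_one_right (hq0 b) (hgM a b)) hqs
  have hinner0 : ∀ a, 0 ≤ ∑' b, q b * gfun r F a b ^ M₂ := fun a =>
    tsum_nonneg fun b => mul_nonneg (hq0 b) (hgM0 a b)
  have hinner1 : ∀ a, (∑' b, q b * gfun r F a b ^ M₂) ≤ 1 := by
    intro a
    have h := Summable.tsum_le_tsum (fun b => mul_le_of_le_one_right (hq0 b) (hgM a b))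
      (hinner_s a) hqs
    linarith [hq1, h]
  have hV_pt0 : ∀ a b, 0 ≤ ψ₁ (a, b) * (pab π a b * (1 - gfun r F a b ^ M₂)) := fun a b =>
    mul_nonneg (hψ₁ _).1 (mul_nonneg (hPAB0 a b) (by linarith [hgM a b]))
  have hV_ptle : ∀ a b, ψ₁ (a, b) * (pab π a b * (1 - gfun r F a b ^ M₂)) ≤ pab π a b := by
    intro a b
    nlinarith [mul_nonneg (mul_nonneg (sub_nonneg.mpr (hψ₁ (a, b)).2) (hPAB0 a b))
        (sub_nonneg.mpr (hgM a b)),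
      mul_nonneg (hPAB0 a b) (hgM0 a b)]
  have hV_s : ∀ a, Summable (fun b => ψ₁ (a, b) * (pab π a b * (1 - gfun r F a b ^ M₂))) :=
    fun a => Summable.of_nonneg_of_le (hV_pt0 a) (hV_ptle a) (hPABs a)
  have hV0 : ∀ a, 0 ≤ ∑' b, ψ₁ (a, b) * (pab π a b * (1 - gfun r F a b ^ M₂)) := fun a =>
    tsum_nonneg (hV_pt0 a)
  have hVle : ∀ a, (∑' b, ψ₁ (a, b) * (pab π a b * (1 - gfun r F a b ^ M₂))) ≤ pa π a :=
    fun a => Summable.tsum_le_tsum (hV_ptle a) (hV_s a) (hPABs a)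
  -- Claim 2 : pointwise bound in a
  have claim2 : ∀ a, pa π a * (∑' b, q b * gfun r F a b ^ M₂) ^ M₁ ≤
      pa π a * Real.exp (-(α₁ * M₁)) +
        (pa π a - ∑' b, ψ₁ (a, b) * (pab π a b * (1 - gfun r F a b ^ M₂))) := by
    intro a
    rcases eq_or_lt_of_le (hPA0 a) with h0 | hpos
    · have hPABz : ∀ b, pab π a b = 0 := by
        intro b
        have hle := Summable.le_tsum (hPABs a) b (fun j _ => hPAB0 a j)
        have heq : (∑' b, pab π a b) = pa π a := rfl
        have := hPAB0 a b
        linarith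
      have hVz : (∑' b, ψ₁ (a, b) * (pab π a b * (1 - gfun r F a b ^ M₂))) = 0 := by
        have hz' : ∀ b, ψ₁ (a, b) * (pab π a b * (1 - gfun r F a b ^ M₂)) = (0:ℝ) :=
          fun b => by rw [hPABz b]; ring
        rw [tsum_congr hz', tsum_zero]
      rw [hVz, ← h0]
      simp
    · have hqg_s : Summable (fun b => q b * (1 - gfun r F a b ^ M₂)) :=
        Summable.of_nonneg_of_le (fun b => mul_nonneg (hq0 b) (by linarith [hgM a b]))
          (fun b => mul_le_of_le_one_right (hq0 b) (by linarith [hgM0 a b])) hqs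
      have hsum_eq : (∑' b, q b * (1 - gfun r F a b ^ M₂)) =
          1 - ∑' b, q b * gfun r F a b ^ M₂ := by
        have h' : ∀ b, q b * (1 - gfun r F a b ^ M₂) = q b - q b * gfun r F a b ^ M₂ :=
          fun b => by ring
        rw [tsum_congr h', Summable.tsum_sub hqs (hinner_s a), hq1]
      have hmul : α₁ * (∑' b, ψ₁ (a, b) * (pab π a b * (1 - gfun r F a b ^ M₂))) ≤
          pa π a * ∑' b, q b * (1 - gfun r F a b ^ M₂) := by
        rw [← tsum_mul_left, ← tsum_mul_left]
        refine Summable.tsum_le_tsum (fun b => ?_) ((hV_s a).mul_left α₁) (hqg_s.mul_left (pa π a))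
        have h1b := h₁ a b
        have hpabeq : (∑' c, π (a, b, c)) = pab π a b := rfl
        have hpaeq : (∑' b', ∑' c', π (a, b', c')) = pa π a := rfl
        rw [hpabeq, hpaeq] at h1b
        nlinarith [mul_le_mul_of_nonneg_right h1b
          (by linarith [hgM a b] : (0:ℝ) ≤ 1 - gfun r F a b ^ M₂)]
      have htle : α₁ * ((∑' b, ψ₁ (a, b) * (pab π a b * (1 - gfun r F a b ^ M₂))) / pa π a) ≤
          ∑' b, q b * (1 - gfun r F a b ^ M₂) := by
        rw [mul_div_assoc', div_le_iff₀ hpos]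
        nlinarith [hmul]
      have hinle : (∑' b, q b * gfun r F a b ^ M₂) ≤
          1 - α₁ * ((∑' b, ψ₁ (a, b) * (pab π a b * (1 - gfun r F a b ^ M₂))) / pa π a) := by
        linarith [htle, hsum_eq]
      have hkey := key_pow_bound (∑' b, q b * gfun r F a b ^ M₂)
        ((∑' b, ψ₁ (a, b) * (pab π a b * (1 - gfun r F a b ^ M₂))) / pa π a) α₁ M₁
        (hinner0 a) hinle (div_nonneg (hV0 a) (hPA0 a)) ((div_le_one hpos).mpr (hVle a))
      have hPt : pa π a *
          ((∑' b, ψ₁ (a, b) * (pab π a b * (1 - gfun r F a b ^ M₂))) / pa π a) =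
          ∑' b, ψ₁ (a, b) * (pab π a b * (1 - gfun r F a b ^ M₂)) := by
        field_simp
      nlinarith [mul_le_mul_of_nonneg_left hkey (hPA0 a), hPt]
  -- summing claim 2 over a
  have hVs : Summable (fun a => ∑' b, ψ₁ (a, b) * (pab π a b * (1 - gfun r F a b ^ M₂))) :=
    Summable.of_nonneg_of_le hV0 hVle hPAs
  have hLHS_s : Summable (fun a => pa π a * (∑' b, q b * gfun r F a b ^ M₂) ^ M₁) :=
    Summable.of_nonneg_of_le (fun a => mul_nonneg (hPA0 a) (pow_nonneg (hinner0 a) M₁))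
      (fun a => mul_le_of_le_one_right (hPA0 a) (pow_le_one₀ (hinner0 a) (hinner1 a))) hPAs
  have step1 : (∑' a, pa π a * (∑' b, q b * gfun r F a b ^ M₂) ^ M₁) ≤
      Real.exp (-(α₁ * M₁)) +
        (1 - ∑' a, ∑' b, ψ₁ (a, b) * (pab π a b * (1 - gfun r F a b ^ M₂))) := by
    have h := Summable.tsum_le_tsum claim2 hLHS_s ((hPAs.mul_right _).add (hPAs.sub hVs))
    rw [Summable.tsum_add (hPAs.mul_right _) (hPAs.sub hVs), Summable.tsum_sub hPAs hVs,
      tsum_mul_right, hPA1] at h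
    linarith
  -- lower bound for the V sum
  have hψS_pt0 : ∀ a b, 0 ≤ ψ₁ (a, b) * sfun π ψ₂ F a b := fun a b =>
    mul_nonneg (hψ₁ _).1 (hS0 a b)
  have hψS_ptle : ∀ a b, ψ₁ (a, b) * sfun π ψ₂ F a b ≤ pab π a b := fun a b =>
    (mul_le_of_le_one_left (hS0 a b) (hψ₁ _).2).trans (hSle a b)
  have hψS_s : ∀ a, Summable (fun b => ψ₁ (a, b) * sfun π ψ₂ F a b) := fun a =>
    Summable.of_nonneg_of_le (hψS_pt0 a) (hψS_ptle a) (hPABs a)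
  have hψP_pt0 : ∀ a b, 0 ≤ ψ₁ (a, b) * pab π a b := fun a b =>
    mul_nonneg (hψ₁ _).1 (hPAB0 a b)
  have hψP_ptle : ∀ a b, ψ₁ (a, b) * pab π a b ≤ pab π a b := fun a b =>
    mul_le_of_le_one_left (hPAB0 a b) (hψ₁ _).2
  have hψP_s : ∀ a, Summable (fun b => ψ₁ (a, b) * pab π a b) := fun a =>
    Summable.of_nonneg_of_le (hψP_pt0 a) (hψP_ptle a) (hPABs a)
  have claim1' : ∀ a b, ψ₁ (a, b) * sfun π ψ₂ F a b -
      Real.exp (-(α₂ * M₂)) * (ψ₁ (a, b) * pab π a b) ≤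
      ψ₁ (a, b) * (pab π a b * (1 - gfun r F a b ^ M₂)) := by
    intro a b
    nlinarith [mul_le_mul_of_nonneg_left (claim1 a b) (hψ₁ (a, b)).1]
  have hVa_lb : ∀ a, (∑' b, ψ₁ (a, b) * sfun π ψ₂ F a b) -
      Real.exp (-(α₂ * M₂)) * (∑' b, ψ₁ (a, b) * pab π a b) ≤
      ∑' b, ψ₁ (a, b) * (pab π a b * (1 - gfun r F a b ^ M₂)) := by
    intro a
    have h := Summable.tsum_le_tsum (claim1' a) ((hψS_s a).sub ((hψP_s a).mul_left _)) (hV_s a)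
    rw [Summable.tsum_sub (hψS_s a) ((hψP_s a).mul_left _), tsum_mul_left] at h
    exact h
  have hT1s : Summable (fun a => ∑' b, ψ₁ (a, b) * sfun π ψ₂ F a b) :=
    Summable.of_nonneg_of_le (fun a => tsum_nonneg (hψS_pt0 a))
      (fun a => Summable.tsum_le_tsum (hψS_ptle a) (hψS_s a) (hPABs a)) hPAs
  have hT2s : Summable (fun a => ∑' b, ψ₁ (a, b) * pab π a b) :=
    Summable.of_nonneg_of_le (fun a => tsum_nonneg (hψP_pt0 a))
      (fun a => Summable.tsum_le_tsum (hψP_ptle a) (hψP_s a) (hPABs a)) hPAs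
  have hT2le1 : (∑' a, ∑' b, ψ₁ (a, b) * pab π a b) ≤ 1 := by
    have h := Summable.tsum_le_tsum (fun a => Summable.tsum_le_tsum (hψP_ptle a) (hψP_s a) (hPABs a)) hT2s hPAs
    exact h.trans (le_of_eq hPA1)
  have step2a : (∑' a, ∑' b, ψ₁ (a, b) * sfun π ψ₂ F a b) -
      Real.exp (-(α₂ * M₂)) * (∑' a, ∑' b, ψ₁ (a, b) * pab π a b) ≤
      ∑' a, ∑' b, ψ₁ (a, b) * (pab π a b * (1 - gfun r F a b ^ M₂)) := by
    have h := Summable.tsum_le_tsum hVa_lb (hT1s.sub (hT2s.mul_left _)) hVs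
    rw [Summable.tsum_sub hT1s (hT2s.mul_left _), tsum_mul_left] at h
    exact h
  -- identify E[ψ₁ψ₂] and Pr{∉F}
  have hWc_s : ∀ a b, Summable (fun c => π (a, b, c) * (ψ₁ (a, b) * ψ₂ (a, b, c))) := fun a b =>
    Summable.of_nonneg_of_le
      (fun c => mul_nonneg (hπ0 _) (mul_nonneg (hψ₁ _).1 (hψ₂ _).1))
      (fun c => mul_le_of_le_one_right (hπ0 _)
        (mul_le_one₀ (hψ₁ _).2 (hψ₂ _).1 (hψ₂ _).2))
      (hsum_c a b)
  have hW0 : ∀ a b, 0 ≤ ∑' c, π (a, b, c) * (ψ₁ (a, b) * ψ₂ (a, b, c)) := fun a b =>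
    tsum_nonneg fun c => mul_nonneg (hπ0 _) (mul_nonneg (hψ₁ _).1 (hψ₂ _).1)
  have hWle : ∀ a b, (∑' c, π (a, b, c) * (ψ₁ (a, b) * ψ₂ (a, b, c))) ≤ pab π a b := fun a b =>
    Summable.tsum_le_tsum (fun c => mul_le_of_le_one_right (hπ0 _)
      (mul_le_one₀ (hψ₁ _).2 (hψ₂ _).1 (hψ₂ _).2)) (hWc_s a b) (hsum_c a b)
  have hN_s : ∀ a b, Summable (fun c : {c : γ // (a, b, c) ∉ F} => π (a, b, c.val)) :=
    fun a b => (hsum_c a b).comp_injective Subtype.val_injective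
  have hN0 : ∀ a b, 0 ≤ ∑' c : {c : γ // (a, b, c) ∉ F}, π (a, b, c.val) := fun a b =>
    tsum_nonneg fun c => hπ0 _
  have hNle : ∀ a b, (∑' c : {c : γ // (a, b, c) ∉ F}, π (a, b, c.val)) ≤ pab π a b :=
    fun a b => tsum_subtype_le_real (fun c => π (a, b, c)) {c | (a, b, c) ∉ F}
      (fun c => hπ0 _) (hsum_c a b)
  have hWN : ∀ a b, (∑' c, π (a, b, c) * (ψ₁ (a, b) * ψ₂ (a, b, c))) -
      (∑' c : {c : γ // (a, b, c) ∉ F}, π (a, b, c.val)) ≤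
      ψ₁ (a, b) * sfun π ψ₂ F a b := by
    intro a b
    have hsplit : (∑' c : {c : γ // (a, b, c) ∈ F},
          π (a, b, c.val) * (ψ₁ (a, b) * ψ₂ (a, b, c.val)))
        + (∑' c : {c : γ // (a, b, c) ∉ F},
          π (a, b, c.val) * (ψ₁ (a, b) * ψ₂ (a, b, c.val)))
        = ∑' c, π (a, b, c) * (ψ₁ (a, b) * ψ₂ (a, b, c)) :=
      Summable.tsum_add_tsum_compl (s := {c : γ | (a, b, c) ∈ F})
        ((hWc_s a b).comp_injective Subtype.val_injective)
        ((hWc_s a b).comp_injective Subtype.val_injective)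
    have hF_eq : ψ₁ (a, b) * sfun π ψ₂ F a b =
        ∑' c : {c : γ // (a, b, c) ∈ F}, π (a, b, c.val) * (ψ₁ (a, b) * ψ₂ (a, b, c.val)) := by
      calc ψ₁ (a, b) * sfun π ψ₂ F a b
          = ∑' c : {c : γ // (a, b, c) ∈ F},
              ψ₁ (a, b) * (ψ₂ (a, b, c.val) * π (a, b, c.val)) := tsum_mul_left.symm
        _ = ∑' c : {c : γ // (a, b, c) ∈ F},
              π (a, b, c.val) * (ψ₁ (a, b) * ψ₂ (a, b, c.val)) :=
            tsum_congr fun c => by ring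
    have hcle : (∑' c : {c : γ // (a, b, c) ∉ F},
          π (a, b, c.val) * (ψ₁ (a, b) * ψ₂ (a, b, c.val)))
        ≤ ∑' c : {c : γ // (a, b, c) ∉ F}, π (a, b, c.val) :=
      Summable.tsum_le_tsum (fun c => mul_le_of_le_one_right (hπ0 _)
          (mul_le_one₀ (hψ₁ _).2 (hψ₂ _).1 (hψ₂ _).2))
        ((hWc_s a b).comp_injective Subtype.val_injective) (hN_s a b)
    linarith [hsplit, hF_eq, hcle]
  have hWb_s : ∀ a, Summable (fun b => ∑' c, π (a, b, c) * (ψ₁ (a, b) * ψ₂ (a, b, c))) :=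
    fun a => Summable.of_nonneg_of_le (hW0 a) (hWle a) (hPABs a)
  have hNb_s : ∀ a, Summable (fun b => ∑' c : {c : γ // (a, b, c) ∉ F}, π (a, b, c.val)) :=
    fun a => Summable.of_nonneg_of_le (hN0 a) (hNle a) (hPABs a)
  have hT1a_lb : ∀ a, (∑' b, ∑' c, π (a, b, c) * (ψ₁ (a, b) * ψ₂ (a, b, c))) -
      (∑' b, ∑' c : {c : γ // (a, b, c) ∉ F}, π (a, b, c.val)) ≤
      ∑' b, ψ₁ (a, b) * sfun π ψ₂ F a b := by
    intro a
    have h := Summable.tsum_le_tsum (hWN a) ((hWb_s a).sub (hNb_s a)) (hψS_s a)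
    rw [Summable.tsum_sub (hWb_s a) (hNb_s a)] at h
    exact h
  have hWa_s : Summable (fun a => ∑' b, ∑' c, π (a, b, c) * (ψ₁ (a, b) * ψ₂ (a, b, c))) :=
    Summable.of_nonneg_of_le (fun a => tsum_nonneg fun b => hW0 a b)
      (fun a => Summable.tsum_le_tsum (hWle a) (hWb_s a) (hPABs a)) hPAs
  have hNa_s : Summable (fun a => ∑' b, ∑' c : {c : γ // (a, b, c) ∉ F}, π (a, b, c.val)) :=
    Summable.of_nonneg_of_le (fun a => tsum_nonneg fun b => hN0 a b)
      (fun a => Summable.tsum_le_tsum (hNle a) (hNb_s a) (hPABs a)) hPAs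
  have hT1_lb : (∑' a, ∑' b, ∑' c, π (a, b, c) * (ψ₁ (a, b) * ψ₂ (a, b, c))) -
      (∑' a, ∑' b, ∑' c : {c : γ // (a, b, c) ∉ F}, π (a, b, c.val)) ≤
      ∑' a, ∑' b, ψ₁ (a, b) * sfun π ψ₂ F a b := by
    have h := Summable.tsum_le_tsum hT1a_lb (hWa_s.sub hNa_s) hT1s
    rw [Summable.tsum_sub hWa_s hNa_s] at h
    exact h
  have hE_s : Summable (fun x : α × β × γ => π x * (ψ₁ (x.1, x.2.1) * ψ₂ x)) :=
    Summable.of_nonneg_of_le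
      (fun x => mul_nonneg (hπ0 x) (mul_nonneg (hψ₁ _).1 (hψ₂ _).1))
      (fun x => mul_le_of_le_one_right (hπ0 x)
        (mul_le_one₀ (hψ₁ _).2 (hψ₂ _).1 (hψ₂ _).2)) hπs
  have hE_eq : (∑' x : α × β × γ, π x * (ψ₁ (x.1, x.2.1) * ψ₂ x)) =
      ∑' a, ∑' b, ∑' c, π (a, b, c) * (ψ₁ (a, b) * ψ₂ (a, b, c)) := by
    rw [Summable.tsum_prod' hE_s (fun a => hE_s.comp_injective (fun y₁ y₂ h => by simpa using h))]
    exact tsum_congr fun a =>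
      Summable.tsum_prod' (hE_s.comp_injective (fun y₁ y₂ h => by simpa using h))
        (fun b => hWc_s a b)
  have hind_s : Summable (Set.indicator {x : α × β × γ | x ∉ F} π) := hπs.indicator _
  have hN_eq : prS π {x | x ∉ F} =
      ∑' a, ∑' b, ∑' c : {c : γ // (a, b, c) ∉ F}, π (a, b, c.val) := by
    show (∑' x, Set.indicator {x : α × β × γ | x ∉ F} π x) = _
    rw [Summable.tsum_prod' hind_s (fun a => hind_s.comp_injective (fun y₁ y₂ h => by simpa using h))]
    refine tsum_congr fun a => ?_
    refine Eq.trans (Summable.tsum_prod'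
      (f := fun y : β × γ => Set.indicator {x : α × β × γ | x ∉ F} π (a, y))
      (hind_s.comp_injective (fun y₁ y₂ h => by simpa using h))
      (fun b => hind_s.comp_injective (fun c₁ c₂ h => by simpa using h))) ?_
    refine tsum_congr fun b => ?_
    refine Eq.trans ?_ (tsum_subtype {c : γ | (a, b, c) ∉ F} (fun c => π (a, b, c))).symm
    refine tsum_congr fun c => ?_
    by_cases hc : (a, b, c) ∈ F <;> simp [Set.indicator_apply, hc]
  -- put everything together
  have hW_lb : (∑' x : α × β × γ, π x * (ψ₁ (x.1, x.2.1) * ψ₂ x)) - prS π {x | x ∉ F} -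
      Real.exp (-(α₂ * M₂)) ≤
      ∑' a, ∑' b, ψ₁ (a, b) * (pab π a b * (1 - gfun r F a b ^ M₂)) := by
    have h3 : Real.exp (-(α₂ * M₂)) * (∑' a, ∑' b, ψ₁ (a, b) * pab π a b) ≤
        Real.exp (-(α₂ * M₂)) :=
      mul_le_of_le_one_right (Real.exp_pos _).le hT2le1
    rw [hE_eq, hN_eq]
    linarith [hT1_lb, step2a, h3]
  have hlog : Real.log α₁ ≤ 0 := Real.log_nonpos hα₁0 hα₁1
  have hexp2 : Real.exp (-(α₂ * M₂)) ≤ Real.exp (-α₂ * M₂ - Real.log α₁) :=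
    Real.exp_le_exp.mpr (by linarith)
  have hexp1 : Real.exp (-(α₁ * M₁)) = Real.exp (-α₁ * M₁) := by rw [neg_mul]
  have hfinal : (∑' a, pa π a * (∑' b, q b * gfun r F a b ^ M₂) ^ M₁) ≤
      1 - (∑' x : α × β × γ, π x * (ψ₁ (x.1, x.2.1) * ψ₂ x)) + prS π {x | x ∉ F} +
        Real.exp (-α₂ * M₂ - Real.log α₁) + Real.exp (-α₁ * M₁) := by
    linarith [step1, hW_lb, hexp2]
  exact hfinal
end
end

section
/- Let X be a random variable on a finite or countably infinite set 𝒳 (the source), and let (Ũ, Ỹ, Z̃) be a triple of random variables on 𝒰×𝒴×𝒵 (finite or countably infinite sets) independent of X. Then for any real numbers D₁, D₂ ≥ 0 and any integers M₁, M₂ ≥ 1, there exist functions f₁ : 𝒳 → [1:M₁], f₂ : 𝒳 → [1:M₂], φ₁ : [1:M₁] → 𝒴, φ₂ : [1:M₁]×[1:M₂] → 𝒵 such that Pr{ d₁(X, φ₁(f₁(X))) > D₁ or d₂(X, φ₂(f₁(X), f₂(X))) > D₂ } ≤ E[ E[ E[ 𝟙{(X, Ũ, Ỹ, Z̃) ∉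 𝒟} | X, Ũ, Ỹ ]^{M₂} | X ]^{M₁} ], where 𝒟 = {(x,u,y,z) : d₁(x,y) ≤ D₁ and d₂(x,z) ≤ D₂}. -/
open scoped BigOperators
open Filter Topology
open scoped ENNReal

noncomputable section

lemma tsum_pi_fin_prod {α : Type*} (g : α → ℝ≥0∞) (n : ℕ) :
    ∑' f : Fin n → α, ∏ i, g (f i) = (∑' a, g a) ^ n := by
  induction n with
  | zero =>
      rw [pow_zero]
      have h1 : ∀ f : Fin 0 → α, ∏ i, g (f i) = 1 := fun f => by simp
      simp only [h1]
      exact tsum_eq_single (fun i => i.elim0) (fun b hb => absurd (Subsingleton.elim b _) hb)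
  | succ n ih =>
      rw [← (Fin.consEquiv (fun _ : Fin (n+1) => α)).tsum_eq
        (fun f : Fin (n+1) → α => ∏ i, g (f i))]
      have key : ∀ p : α × (Fin n → α),
          (∏ i, g ((Fin.consEquiv (fun _ : Fin (n+1) => α)) p i))
            = g p.1 * ∏ i, g (p.2 i) := by
        intro p
        rw [Fin.prod_univ_succ]
        simp [Fin.consEquiv]
      simp only [key]
      rw [ENNReal.tsum_prod']
      simp only [ENNReal.tsum_mul_left, ENNReal.tsum_mul_right]
      rw [ih, pow_succ, mul_comm]

lemma exists_le_avg {Ω : Type*} (μ err : Ω → ℝ≥0∞) (hμ : ∑' ω, μ ω = 1)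
    (herr : ∀ ω, err ω ≤ 1) : ∃ ω, err ω ≤ ∑' ω, μ ω * err ω := by
  classical
  by_contra h
  push_neg at h
  set R := ∑' ω, μ ω * err ω with hR
  obtain ⟨ω₀, hω₀⟩ : ∃ ω, μ ω ≠ 0 := by
    by_contra hc; push_neg at hc
    rw [tsum_congr (fun ω => hc ω)] at hμ; simp at hμ
  have hRlt : R < err ω₀ := h ω₀
  have hRtop : R ≠ ∞ := ((hRlt.trans_le (herr ω₀)).trans_le le_top).ne
  have hμle : μ ω₀ ≤ 1 := hμ ▸ ENNReal.le_tsum ω₀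
  have hμtop : μ ω₀ ≠ ∞ := (hμle.trans_lt (by norm_num)).ne
  set T := ∑' ω, (if ω = ω₀ then 0 else μ ω) with hT
  have h1 : R = μ ω₀ * err ω₀ + ∑' ω, if ω = ω₀ then 0 else μ ω * err ω :=
    ENNReal.summable.tsum_eq_add_tsum_ite' (f := fun ω => μ ω * err ω) ω₀
  have h2 : (1:ℝ≥0∞) = μ ω₀ + T := by
    rw [← hμ]; exact ENNReal.summable.tsum_eq_add_tsum_ite' ω₀
  have h3 : T * R ≤ ∑' ω, (if ω = ω₀ then 0 else μ ω * err ω) := by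
    rw [hT, ← ENNReal.tsum_mul_right]
    refine Summable.tsum_le_tsum (fun ω => ?_) ENNReal.summable ENNReal.summable
    by_cases hω : ω = ω₀
    · simp [hω]
    · simp only [hω, if_false]
      exact mul_le_mul_right (h ω).le _
  have hT1 : T ≤ 1 := h2 ▸ le_add_self
  have hTR : T * R ≠ ∞ := ENNReal.mul_ne_top ((hT1.trans_lt (by norm_num)).ne) hRtop
  have key : R < R := by
    calc R = μ ω₀ * R + T * R := by rw [← add_mul, ← h2, one_mul]
    _ < μ ω₀ * err ω₀ + T * R :=
        ENNReal.add_lt_add_right hTR ((ENNReal.mul_lt_mul_iff_right hω₀ hμtop).2 hRlt)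
    _ ≤ μ ω₀ * err ω₀ + ∑' ω, (if ω = ω₀ then 0 else μ ω * err ω) := add_le_add_right h3 _
    _ = R := h1.symm
  exact absurd key (lt_irrefl R)

/-- Theorem 1, random coding existence bound.
`lam` is the joint pmf of the triple `(Ũ,Ỹ,Z̃)` which is independent of the
source `X`.  There is a code whose probability that either distortion level
is exceeded is bounded by the iterated-expectation expression, where
`P_{ŨỸ}(u,y) = ∑' z, lam (u,y,z)` and
`P_{Z̃|ŨỸ}(z|u,y) = lam (u,y,z) / ∑' z', lam (u,y,z')`. -/
theorem code_existence {𝒳 𝒰 𝒴 𝒵 : Type*}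
    [Countable 𝒳] [Countable 𝒰] [Countable 𝒴] [Countable 𝒵]
    (pX : 𝒳 → ℝ) (hpX : IsPmf pX)
    (lam : 𝒰 × 𝒴 × 𝒵 → ℝ) (hlam : IsPmf lam)
    (d₁ : 𝒳 → 𝒴 → ℝ) (d₂ : 𝒳 → 𝒵 → ℝ)
    (hd₁ : ∀ x y, 0 ≤ d₁ x y) (hd₂ : ∀ x z, 0 ≤ d₂ x z)
    (D₁ D₂ : ℝ) (hD₁ : 0 ≤ D₁) (hD₂ : 0 ≤ D₂)
    (M₁ M₂ : ℕ) (hM₁ : 1 ≤ M₁) (hM₂ : 1 ≤ M₂) :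
    ∃ C : SRCode 𝒳 𝒴 𝒵 M₁ M₂,
      prS pX { x | D₁ < d₁ x (C.φ₁ (C.f₁ x)) ∨
          D₂ < d₂ x (C.φ₂ (C.f₁ x) (C.f₂ x)) } ≤
      ∑' x, pX x *
        (∑' w : 𝒰 × 𝒴, (∑' z, lam (w.1, w.2, z)) *
          (∑' z : {z : 𝒵 // ¬(d₁ x w.2 ≤ D₁ ∧ d₂ x z ≤ D₂)},
            lam (w.1, w.2, z.val) / (∑' z', lam (w.1, w.2, z'))) ^ M₂) ^ M₁ := by
  classical
  -- ℝ≥0∞ versions of the data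
  set Lf : 𝒰 × 𝒴 × 𝒵 → ℝ≥0∞ := fun t => ENNReal.ofReal (lam t) with hLfdef
  set pE : 𝒳 → ℝ≥0∞ := fun x => ENNReal.ofReal (pX x) with hpEdef
  set Sr : 𝒰 × 𝒴 → ℝ := fun w => ∑' z, lam (w.1, w.2, z) with hSrdef
  set SE : 𝒰 × 𝒴 → ℝ≥0∞ := fun w => ∑' z, Lf (w.1, w.2, z) with hSEdef
  set B : 𝒳 → 𝒴 → 𝒵 → Prop := fun x y z => ¬(d₁ x y ≤ D₁ ∧ d₂ x z ≤ D₂) with hBdef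
  set bE : 𝒳 → 𝒴 → 𝒵 → ℝ≥0∞ := fun x y z => if B x y z then 1 else 0 with hbEdef
  set qr : 𝒳 → 𝒰 × 𝒴 → ℝ := fun x w =>
    ∑' z : {z : 𝒵 // ¬(d₁ x w.2 ≤ D₁ ∧ d₂ x z ≤ D₂)},
      lam (w.1, w.2, z.val) / (∑' z', lam (w.1, w.2, z')) with hqrdef
  set qE : 𝒳 → 𝒰 × 𝒴 → ℝ≥0∞ := fun x w =>
    ∑' z, (Lf (w.1, w.2, z) / SE w) * bE x w.2 z with hqEdef
  -- basic facts
  have hfib : ∀ w : 𝒰 × 𝒴, Summable (fun z => lam (w.1, w.2, z)) := by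
    intro w
    exact hlam.2.summable.comp_injective (fun a b hab => by
      simpa using congrArg (fun t : 𝒰 × 𝒴 × 𝒵 => t.2.2) hab)
  have hSr_nonneg : ∀ w, 0 ≤ Sr w := fun w => tsum_nonneg (fun z => hlam.1 _)
  have hlamle : ∀ (w : 𝒰 × 𝒴) (z : 𝒵), lam (w.1, w.2, z) ≤ Sr w := fun w z =>
    Summable.le_tsum (hfib w) z (fun b _ => hlam.1 _)
  have hSE_eq : ∀ w, SE w = ENNReal.ofReal (Sr w) := fun w =>
    (ENNReal.ofReal_tsum_of_nonneg (fun z => hlam.1 _) (hfib w)).symm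
  have hLsum : ∑' t, Lf t = 1 := by
    rw [hLfdef, ← ENNReal.ofReal_tsum_of_nonneg hlam.1 hlam.2.summable,
      hlam.2.tsum_eq, ENNReal.ofReal_one]
  have hSEsum : ∑' w, SE w = 1 := by
    rw [hSEdef]
    have h1 : ∑' (w : 𝒰 × 𝒴), ∑' z, Lf (w.1, w.2, z)
        = ∑' p : (𝒰 × 𝒴) × 𝒵, Lf (p.1.1, p.1.2, p.2) :=
      (ENNReal.tsum_prod' (f := fun p : (𝒰 × 𝒴) × 𝒵 => Lf (p.1.1, p.1.2, p.2))).symm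
    rw [h1, ← hLsum]
    exact (Equiv.prodAssoc 𝒰 𝒴 𝒵).tsum_eq Lf
  have hSE_le_one : ∀ w, SE w ≤ 1 := fun w => hSEsum ▸ ENNReal.le_tsum w
  have hSE_top : ∀ w, SE w ≠ ∞ := fun w => ((hSE_le_one w).trans_lt (by norm_num)).ne
  have hrat : ∀ w, ∑' z, Lf (w.1, w.2, z) / SE w = SE w * (SE w)⁻¹ := by
    intro w
    simp only [div_eq_mul_inv, ENNReal.tsum_mul_right]
    rfl
  have hrat1 : ∀ w, SE w ≠ 0 → ∑' z, Lf (w.1, w.2, z) / SE w = 1 := fun w h0 => by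
    rw [hrat w, ENNReal.mul_inv_cancel h0 (hSE_top w)]
  have hrat_le : ∀ w, ∑' z, Lf (w.1, w.2, z) / SE w ≤ 1 := by
    intro w
    by_cases h0 : SE w = 0
    · rw [hrat w, h0, zero_mul]; exact zero_le_one
    · rw [hrat1 w h0]
  have hbE_le_one : ∀ x y z, bE x y z ≤ 1 := by
    intro x y z; rw [hbEdef]; dsimp only; split <;> simp
  have hqE_le_one : ∀ x w, qE x w ≤ 1 := by
    intro x w
    rw [hqEdef]
    refine le_trans (Summable.tsum_le_tsum (fun z => ?_) ENNReal.summable ENNReal.summable) (hrat_le w)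
    calc Lf (w.1, w.2, z) / SE w * bE x w.2 z
        ≤ Lf (w.1, w.2, z) / SE w * 1 := mul_le_mul_right (hbE_le_one x w.2 z) _
    _ = Lf (w.1, w.2, z) / SE w := mul_one _
  -- bridge for q
  have hqE_eq : ∀ x w, qE x w = ENNReal.ofReal (qr x w) := by
    intro x w
    have hsub : qr x w = ∑' z, Set.indicator {z : 𝒵 | B x w.2 z}
        (fun z => lam (w.1, w.2, z) / Sr w) z := by
      rw [hqrdef]
      exact tsum_subtype {z : 𝒵 | B x w.2 z} (fun z => lam (w.1, w.2, z) / Sr w)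
    rw [hsub, ENNReal.ofReal_tsum_of_nonneg
      (Set.indicator_nonneg (fun z _ => div_nonneg (hlam.1 _) (hSr_nonneg w)))
      (((hfib w).div_const _).indicator _)]
    refine tsum_congr (fun z => ?_)
    by_cases hz : B x w.2 z
    · rw [Set.indicator_of_mem (show z ∈ {z : 𝒵 | B x w.2 z} from hz)]
      have hb1 : bE x w.2 z = 1 := by rw [hbEdef]; exact if_pos hz
      rw [hb1, mul_one]
      by_cases h0 : Sr w = 0
      · have hz0 : lam (w.1, w.2, z) = 0 :=
          le_antisymm (h0 ▸ hlamle w z) (hlam.1 _)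
        have hLf0 : Lf (w.1, w.2, z) = 0 := by
          show ENNReal.ofReal (lam (w.1, w.2, z)) = 0
          rw [hz0, ENNReal.ofReal_zero]
        simp [hz0, h0, hLf0]
      · rw [ENNReal.ofReal_div_of_pos (lt_of_le_of_ne (hSr_nonneg w) (Ne.symm h0)),
          ← hSE_eq w]
    · rw [Set.indicator_of_notMem (show z ∉ {z : 𝒵 | B x w.2 z} from hz)]
      have hb0 : bE x w.2 z = 0 := by rw [hbEdef]; exact if_neg hz
      rw [hb0, mul_zero, ENNReal.ofReal_zero]
  have hqr_nonneg : ∀ x w, 0 ≤ qr x w := fun x w =>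
    tsum_nonneg (fun z => div_nonneg (hlam.1 _) (hSr_nonneg w))
  have hqr_le_one : ∀ x w, qr x w ≤ 1 := by
    intro x w
    have h := hqE_le_one x w
    rw [hqE_eq x w] at h
    exact ENNReal.ofReal_le_one.1 h
  -- summability of Sr
  have hSr_summable : Summable Sr := by
    have h1 : Sr = fun w => (SE w).toReal := by
      funext w; rw [hSE_eq w, ENNReal.toReal_ofReal (hSr_nonneg w)]
    rw [h1]
    exact ENNReal.summable_toReal (by rw [hSEsum]; exact ENNReal.one_ne_top)
  have hSr_sum_one : ∑' w, Sr w = 1 := by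
    have h1 : ENNReal.ofReal (∑' w, Sr w) = 1 := by
      rw [ENNReal.ofReal_tsum_of_nonneg hSr_nonneg hSr_summable, ← hSEsum]
      exact tsum_congr (fun w => (hSE_eq w).symm)
    have h2 := ENNReal.ofReal_eq_one.1 h1
    exact h2
  -- the real inner sum
  set Ir : 𝒳 → ℝ := fun x => ∑' w, Sr w * (qr x w) ^ M₂ with hIrdef
  have hIr_term_nonneg : ∀ x w, 0 ≤ Sr w * (qr x w) ^ M₂ := fun x w =>
    mul_nonneg (hSr_nonneg w) (pow_nonneg (hqr_nonneg x w) _)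
  have hIr_term_le : ∀ x w, Sr w * (qr x w) ^ M₂ ≤ Sr w := fun x w =>
    mul_le_of_le_one_right (hSr_nonneg w) (pow_le_one₀ (hqr_nonneg x w) (hqr_le_one x w))
  have hIr_summable : ∀ x, Summable (fun w => Sr w * (qr x w) ^ M₂) := fun x =>
    Summable.of_nonneg_of_le (hIr_term_nonneg x) (hIr_term_le x) hSr_summable
  have hIE_eq : ∀ x, ∑' w, SE w * (qE x w) ^ M₂ = ENNReal.ofReal (Ir x) := by
    intro x
    rw [hIrdef]
    rw [ENNReal.ofReal_tsum_of_nonneg (hIr_term_nonneg x) (hIr_summable x)]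
    refine tsum_congr (fun w => ?_)
    rw [hSE_eq w, hqE_eq x w, ← ENNReal.ofReal_pow (hqr_nonneg x w),
      ← ENNReal.ofReal_mul (hSr_nonneg w)]
  have hIr_nonneg : ∀ x, 0 ≤ Ir x := fun x => tsum_nonneg (hIr_term_nonneg x)
  have hIr_le_one : ∀ x, Ir x ≤ 1 := by
    intro x
    rw [hIrdef]
    calc (∑' w, Sr w * (qr x w) ^ M₂) ≤ ∑' w, Sr w :=
      Summable.tsum_le_tsum (hIr_term_le x) (hIr_summable x) hSr_summable
    _ = 1 := hSr_sum_one
  -- outer bridge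
  have houter_term_nonneg : ∀ x, 0 ≤ pX x * (Ir x) ^ M₁ := fun x =>
    mul_nonneg (hpX.1 x) (pow_nonneg (hIr_nonneg x) _)
  have houter_term_le : ∀ x, pX x * (Ir x) ^ M₁ ≤ pX x := fun x =>
    mul_le_of_le_one_right (hpX.1 x) (pow_le_one₀ (hIr_nonneg x) (hIr_le_one x))
  have houter_summable : Summable (fun x => pX x * (Ir x) ^ M₁) :=
    Summable.of_nonneg_of_le houter_term_nonneg houter_term_le hpX.2.summable
  set RHSE : ℝ≥0∞ := ∑' x, pE x * (∑' w, SE w * (qE x w) ^ M₂) ^ M₁ with hRHSEdef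
  have hRHSE_eq : RHSE = ENNReal.ofReal (∑' x, pX x * (Ir x) ^ M₁) := by
    rw [hRHSEdef, ENNReal.ofReal_tsum_of_nonneg houter_term_nonneg houter_summable]
    refine tsum_congr (fun x => ?_)
    rw [hIE_eq x, hpEdef, ← ENNReal.ofReal_pow (hIr_nonneg x),
      ← ENNReal.ofReal_mul (hpX.1 x)]
  -- the random codebook distribution
  set ν : (𝒰 × 𝒴) × (Fin M₂ → 𝒵) → ℝ≥0∞ := fun c =>
    SE c.1 * ∏ j, (Lf (c.1.1, c.1.2, c.2 j) / SE c.1) with hνdef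
  set hxf : 𝒳 → (𝒰 × 𝒴) × (Fin M₂ → 𝒵) → ℝ≥0∞ := fun x c =>
    ∏ j, bE x c.1.2 (c.2 j) with hhxdef
  have hν_sum : ∑' c, ν c = 1 := by
    rw [hνdef, ENNReal.tsum_prod']
    have h1 : ∀ w : 𝒰 × 𝒴, ∑' g : Fin M₂ → 𝒵, SE w * ∏ j, (Lf (w.1, w.2, g j) / SE w)
        = SE w := by
      intro w
      rw [ENNReal.tsum_mul_left, tsum_pi_fin_prod (fun z => Lf (w.1, w.2, z) / SE w) M₂]
      by_cases h0 : SE w = 0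
      · rw [h0, zero_mul]
      · rw [hrat1 w h0, one_pow, mul_one]
    calc ∑' (w : 𝒰 × 𝒴) (g : Fin M₂ → 𝒵), SE w * ∏ j, (Lf (w.1, w.2, g j) / SE w)
        = ∑' w, SE w := tsum_congr h1
    _ = 1 := hSEsum
  have hinner : ∀ x, ∑' c, ν c * hxf x c = ∑' w, SE w * (qE x w) ^ M₂ := by
    intro x
    rw [hνdef, hhxdef, ENNReal.tsum_prod']
    refine tsum_congr (fun w => ?_)
    have h1 : ∀ g : Fin M₂ → 𝒵,
        SE w * (∏ j, (Lf (w.1, w.2, g j) / SE w)) * ∏ j, bE x w.2 (g j)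
          = SE w * ∏ j, ((Lf (w.1, w.2, g j) / SE w) * bE x w.2 (g j)) := by
      intro g
      rw [mul_assoc, ← Finset.prod_mul_distrib]
    calc ∑' g : Fin M₂ → 𝒵,
        SE w * (∏ j, (Lf (w.1, w.2, g j) / SE w)) * ∏ j, bE x w.2 (g j)
        = ∑' g : Fin M₂ → 𝒵,
          SE w * ∏ j, ((Lf (w.1, w.2, g j) / SE w) * bE x w.2 (g j)) := tsum_congr h1
    _ = SE w * (∑' z, (Lf (w.1, w.2, z) / SE w) * bE x w.2 z) ^ M₂ := by
        rw [ENNReal.tsum_mul_left,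
          tsum_pi_fin_prod (fun z => (Lf (w.1, w.2, z) / SE w) * bE x w.2 z) M₂]
    _ = SE w * (qE x w) ^ M₂ := by rw [hqEdef]
  -- codebook space
  set μ : (Fin M₁ → (𝒰 × 𝒴) × (Fin M₂ → 𝒵)) → ℝ≥0∞ := fun ω => ∏ i, ν (ω i) with hμdef
  set G : 𝒳 → (Fin M₁ → (𝒰 × 𝒴) × (Fin M₂ → 𝒵)) → ℝ≥0∞ := fun x ω =>
    ∏ i, hxf x (ω i) with hGdef
  set errE : (Fin M₁ → (𝒰 × 𝒴) × (Fin M₂ → 𝒵)) → ℝ≥0∞ := fun ω =>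
    ∑' x, pE x * G x ω with herrdef
  have hμ_sum : ∑' ω, μ ω = 1 := by
    rw [hμdef, tsum_pi_fin_prod ν M₁, hν_sum, one_pow]
  have hpE_sum : ∑' x, pE x = 1 := by
    rw [hpEdef, ← ENNReal.ofReal_tsum_of_nonneg hpX.1 hpX.2.summable,
      hpX.2.tsum_eq, ENNReal.ofReal_one]
  have hhx_le_one : ∀ x c, hxf x c ≤ 1 := by
    intro x c
    rw [hhxdef]
    exact Finset.prod_le_one (fun j _ => zero_le) (fun j _ => hbE_le_one _ _ _)
  have hG_le_one : ∀ x ω, G x ω ≤ 1 := by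
    intro x ω
    rw [hGdef]
    exact Finset.prod_le_one (fun i _ => zero_le) (fun i _ => hhx_le_one _ _)
  have herr_le_one : ∀ ω, errE ω ≤ 1 := by
    intro ω
    rw [herrdef]
    calc (∑' x, pE x * G x ω) ≤ ∑' x, pE x := by
          refine Summable.tsum_le_tsum (fun x => ?_) ENNReal.summable ENNReal.summable
          calc pE x * G x ω ≤ pE x * 1 := mul_le_mul_right (hG_le_one x ω) _
          _ = pE x := mul_one _
    _ = 1 := hpE_sum
  -- Fubini
  have havg : ∑' ω, μ ω * errE ω = RHSE := by
    rw [herrdef, hRHSEdef]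
    calc ∑' ω, μ ω * ∑' x, pE x * G x ω
        = ∑' ω, ∑' x, μ ω * (pE x * G x ω) := tsum_congr (fun ω => ENNReal.tsum_mul_left.symm)
    _ = ∑' x, ∑' ω, μ ω * (pE x * G x ω) := ENNReal.tsum_comm
    _ = ∑' x, pE x * ∑' ω, μ ω * G x ω := by
        refine tsum_congr (fun x => ?_)
        rw [← ENNReal.tsum_mul_left]
        exact tsum_congr (fun ω => by ring)
    _ = ∑' x, pE x * (∑' w, SE w * (qE x w) ^ M₂) ^ M₁ := by
        refine tsum_congr (fun x => ?_)
        congr 1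
        have h1 : ∀ ω, μ ω * G x ω = ∏ i, (ν (ω i) * hxf x (ω i)) := by
          intro ω
          rw [hμdef, hGdef, ← Finset.prod_mul_distrib]
        calc ∑' ω, μ ω * G x ω = ∑' ω : Fin M₁ → (𝒰 × 𝒴) × (Fin M₂ → 𝒵),
              ∏ i, (ν (ω i) * hxf x (ω i)) := tsum_congr h1
        _ = (∑' c, ν c * hxf x c) ^ M₁ := tsum_pi_fin_prod (fun c => ν c * hxf x c) M₁
        _ = (∑' w, SE w * (qE x w) ^ M₂) ^ M₁ := by rw [hinner x]
  -- pick a good codebook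
  obtain ⟨ω, hω⟩ := exists_le_avg μ errE hμ_sum herr_le_one
  have hbound : errE ω ≤ RHSE := hω.trans (le_of_eq havg)
  -- build the code
  have hM₁pos : 0 < M₁ := hM₁
  have hM₂pos : 0 < M₂ := hM₂
  set φ₁ : Fin M₁ → 𝒴 := fun i => (ω i).1.2 with hφ₁def
  set φ₂ : Fin M₁ → Fin M₂ → 𝒵 := fun i j => (ω i).2 j with hφ₂def
  set sel : 𝒳 → Fin M₁ × Fin M₂ := fun x =>
    if hg : ∃ p : Fin M₁ × Fin M₂, d₁ x (φ₁ p.1) ≤ D₁ ∧ d₂ x (φ₂ p.1 p.2) ≤ D₂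
    then hg.choose else (⟨0, hM₁pos⟩, ⟨0, hM₂pos⟩) with hseldef
  set C : SRCode 𝒳 𝒴 𝒵 M₁ M₂ :=
    ⟨fun x => (sel x).1, fun x => (sel x).2, φ₁, φ₂⟩ with hCdef
  refine ⟨C, ?_⟩
  set errSet : Set 𝒳 := { x | D₁ < d₁ x (C.φ₁ (C.f₁ x)) ∨
      D₂ < d₂ x (C.φ₂ (C.f₁ x) (C.f₂ x)) } with hErrdef
  have hbad : ∀ x ∈ errSet, ∀ (i : Fin M₁) (j : Fin M₂), B x (φ₁ i) (φ₂ i j) := by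
    intro x hx i j hcon
    have hg : ∃ p : Fin M₁ × Fin M₂, d₁ x (φ₁ p.1) ≤ D₁ ∧ d₂ x (φ₂ p.1 p.2) ≤ D₂ :=
      ⟨(i, j), hcon⟩
    have hsel : sel x = hg.choose := by rw [hseldef]; exact dif_pos hg
    have hspec := hg.choose_spec
    rw [← hsel] at hspec
    rcases hx with hx1 | hx1
    · exact absurd hspec.1 (not_le.2 hx1)
    · exact absurd hspec.2 (not_le.2 hx1)
  have hpt : ∀ x, ENNReal.ofReal (Set.indicator errSet pX x) ≤ pE x * G x ω := by
    intro x
    by_cases hx : x ∈ errSet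
    · rw [Set.indicator_of_mem hx]
      have hG1 : G x ω = 1 := by
        rw [hGdef]
        refine Finset.prod_eq_one (fun i _ => ?_)
        rw [hhxdef]
        refine Finset.prod_eq_one (fun j _ => ?_)
        rw [hbEdef]
        exact if_pos (hbad x hx i j)
      rw [hG1, mul_one, hpEdef]
    · rw [Set.indicator_of_notMem hx, ENNReal.ofReal_zero]
      exact zero_le
  have hfinE : ENNReal.ofReal (prS pX errSet) ≤ RHSE := by
    have h1 : ENNReal.ofReal (prS pX errSet)
        = ∑' x, ENNReal.ofReal (Set.indicator errSet pX x) := by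
      unfold prS
      exact ENNReal.ofReal_tsum_of_nonneg
        (Set.indicator_nonneg (fun x _ => hpX.1 x)) (hpX.2.summable.indicator _)
    rw [h1]
    calc ∑' x, ENNReal.ofReal (Set.indicator errSet pX x)
        ≤ ∑' x, pE x * G x ω := Summable.tsum_le_tsum hpt ENNReal.summable ENNReal.summable
    _ = errE ω := by rw [herrdef]
    _ ≤ RHSE := hbound
  have hRHSr_nonneg : 0 ≤ ∑' x, pX x * (Ir x) ^ M₁ := tsum_nonneg houter_term_nonneg
  rw [hRHSE_eq] at hfinE
  exact (ENNReal.ofReal_le_ofReal_iff hRHSr_nonneg).1 hfinE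
end
end

section
/- (Outer bound for the successive refinement problem.) Let X be a source on a finite or countably infinite set 𝒳, let D₁, D₂ ≥ 0 and ε₁, ε₂ > 0, and let 𝒰 be any finite or countably infinite set with |𝒰| ≥ |𝒳|. Then 𝓜(D, ε | X) ⊆ ⋃_{P_{UYZ|X} ∈ 𝒫(D, ε | X)} ⋂_{(δ₁,δ₂) ∈ (0,1]²} 𝓜_O(δ, P_{UYZ|X}), where 𝓜_O(δ, P_{UYZ|X}) ≜ {(M₁, M₂) ∈ ℕ² : log M₁ ≥ I_∞^{δ₁}(X; U, Y) + log δ₁ and log M₂ ≥ I_∞^{δ₂}(X; Z | U, Y) + log δ₂}, with (X, U, Y, Z) distributed according to P_X × P_{UYZ|X}. -/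
open scoped BigOperators
open Filter Topology

noncomputable section

namespace SR

lemma ite_nonneg {c : Prop} [Decidable c] {r : ℝ} (h : 0 ≤ r) : 0 ≤ if c then r else 0 := by
  split <;> simp [h]

lemma summable_ite {α : Type*} {p : α → ℝ} (hp : Summable p) (c : α → Prop)
    [∀ a, Decidable (c a)] :
    Summable (fun a => if c a then p a else 0) := by
  refine (hp.indicator {a | c a}).congr fun a => ?_
  by_cases h : c a <;> simp [Set.indicator_apply, Set.mem_setOf_eq, h]

lemma graph_tsum {α β : Type*} (e : α → β) (h : α → ℝ)
    [∀ q : α × β, Decidable (q.2 = e q.1)] :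
    ∑' q : α × β, (if q.2 = e q.1 then h q.1 else 0) = ∑' x, h x := by
  have hinj : Function.Injective (fun x : α => (x, e x)) := fun a b hab => congrArg Prod.fst hab
  have hsupp : Function.support (fun q : α × β => if q.2 = e q.1 then h q.1 else 0)
      ⊆ Set.range (fun x : α => (x, e x)) := by
    intro q hq
    have h2 : q.2 = e q.1 := by
      by_contra hne
      exact (Function.mem_support.mp hq) (if_neg hne)
    refine ⟨q.1, ?_⟩
    dsimp only
    rw [← h2]
  rw [← hinj.tsum_eq hsupp]
  exact tsum_congr fun x => if_pos rfl

lemma tsum_shift_ite {γ : Type*} (c : Prop) (z₀ : γ) (r : ℝ)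
    [Decidable c] [∀ zz : γ, Decidable (c ∧ zz = z₀)] [DecidablePred (fun zz : γ => zz = z₀)] :
    ∑' zz : γ, (if c ∧ zz = z₀ then r else 0) = if c then r else 0 := by
  by_cases h : c
  · calc ∑' zz : γ, (if c ∧ zz = z₀ then r else 0)
        = ∑' zz : γ, (if zz = z₀ then r else 0) := tsum_congr fun zz => by simp [h]
      _ = r := tsum_ite_eq z₀ (fun _ => r)
      _ = if c then r else 0 := by rw [if_pos h]
  · simp [h]

lemma tsum_fiber_eq {α ι : Type*} [Fintype ι] [DecidableEq ι] {p : α → ℝ} (hp : Summable p)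
    (κ : α → ι) :
    ∑ i : ι, (∑' a, if κ a = i then p a else 0) = ∑' a, p a := by
  rw [← Summable.tsum_finsetSum (fun i _ => summable_ite hp (fun a => κ a = i))]
  exact tsum_congr fun a => by simp [Finset.sum_ite_eq]

lemma fiber_bound {α ι : Type*} [Fintype ι] [DecidableEq ι] {p : α → ℝ} (hp : Summable p)
    (hp0 : ∀ a, 0 ≤ p a) (κ : α → ι) (q : ι → Prop) [DecidablePred q] (bound : ι → ℝ)
    (hb0 : ∀ i, 0 ≤ bound i)
    (hb : ∀ i, q i → (∑' a, if κ a = i then p a else 0) ≤ bound i) :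
    (∑' a, if q (κ a) then p a else 0) ≤ ∑ i : ι, bound i := by
  have h1 : ∀ a, (if q (κ a) then p a else 0)
      = ∑ i : ι, (if κ a = i then (if q i then p a else 0) else 0) := by
    intro a
    simp only [Finset.sum_ite_eq, Finset.mem_univ, if_true]
  calc (∑' a, if q (κ a) then p a else 0)
      = ∑' a, ∑ i : ι, (if κ a = i then (if q i then p a else 0) else 0) := tsum_congr h1
    _ = ∑ i : ι, ∑' a, (if κ a = i then (if q i then p a else 0) else 0) :=
        Summable.tsum_finsetSum (fun i _ => by
          by_cases h : q i
          · simp only [h, if_true]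
            exact summable_ite hp (fun a => κ a = i)
          · simp only [h, if_false, ite_self]
            exact summable_zero)
    _ ≤ ∑ i : ι, bound i := by
        refine Finset.sum_le_sum fun i _ => ?_
        by_cases h : q i
        · calc (∑' a, if κ a = i then (if q i then p a else 0) else 0)
              = ∑' a, (if κ a = i then p a else 0) := tsum_congr fun a => by simp [h]
            _ ≤ bound i := hb i h
        · calc (∑' a, if κ a = i then (if q i then p a else 0) else 0) = 0 := by simp [h]
            _ ≤ bound i := hb0 i

lemma Dinf_le_of {A : Type*} [Nonempty A] (P Q : A → ℝ) (δ K : ℝ)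
    (hK : 1 ≤ K) (ψ : A → ℝ) (hψ01 : ∀ a, 0 ≤ ψ a ∧ ψ a ≤ 1)
    (hcons : 1 - δ ≤ ∑' a, ψ a * P a)
    (hsup : ∀ a, ψ a * P a / Q a ≤ K)
    (hnn : ∀ a, 0 ≤ ψ a * P a / Q a) :
    Dinf P Q δ ≤ Real.log K := by
  have hbdd : BddBelow { d : ℝ | ∃ ψ : A → ℝ, (∀ a, 0 ≤ ψ a ∧ ψ a ≤ 1) ∧
      1 - δ ≤ ∑' a, ψ a * P a ∧
      d = max 0 (Real.log (⨆ a, ψ a * P a / Q a)) } := by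
    refine ⟨0, ?_⟩
    rintro d ⟨ψ', _, _, rfl⟩
    exact le_max_left _ _
  have hmem : max 0 (Real.log (⨆ a, ψ a * P a / Q a)) ∈ { d : ℝ | ∃ ψ : A → ℝ,
      (∀ a, 0 ≤ ψ a ∧ ψ a ≤ 1) ∧ 1 - δ ≤ ∑' a, ψ a * P a ∧
      d = max 0 (Real.log (⨆ a, ψ a * P a / Q a)) } := ⟨ψ, hψ01, hcons, rfl⟩
  refine le_trans (csInf_le hbdd hmem) ?_
  refine max_le (Real.log_nonneg hK) ?_
  have h0 : 0 ≤ ⨆ a, ψ a * P a / Q a := Real.iSup_nonneg hnn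
  rcases h0.eq_or_lt with h | h
  · rw [← h, Real.log_zero]; exact Real.log_nonneg hK
  · exact Real.log_le_log h (ciSup_le hsup)

end SR

/-- Theorem 3, outer bound on the set of pairs of numbers of
codewords.  The hypothesis `hU` expresses `|𝒰| ≥ |𝒳|`.  The right-hand side is
the union over `P_{UYZ|X} ∈ 𝒫(D,ε|X)` of the intersection over
`δ = (δ₁,δ₂) ∈ (0,1]²` of `𝓜_O(δ,P_{UYZ|X})`. -/
theorem outer_bound {𝒳 𝒴 𝒵 𝒰 : Type*}
    [Countable 𝒳] [Countable 𝒴] [Countable 𝒵] [Countable 𝒰]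
    (hU : ∃ f : 𝒳 → 𝒰, Function.Injective f)
    (pX : 𝒳 → ℝ) (hpX : IsPmf pX)
    (d₁ : 𝒳 → 𝒴 → ℝ) (d₂ : 𝒳 → 𝒵 → ℝ)
    (hd₁ : ∀ x y, 0 ≤ d₁ x y) (hd₂ : ∀ x z, 0 ≤ d₂ x z)
    (D₁ D₂ ε₁ ε₂ : ℝ) (hD₁ : 0 ≤ D₁) (hD₂ : 0 ≤ D₂)
    (hε₁ : 0 < ε₁) (hε₂ : 0 < ε₂) :
    MSet pX d₁ d₂ D₁ D₂ ε₁ ε₂ ⊆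
    { m : ℕ × ℕ |
      ∃ W : 𝒳 → 𝒰 × 𝒴 × 𝒵 → ℝ,
        (∀ x, IsPmf (W x)) ∧
        prS (fun q : 𝒳 × (𝒰 × 𝒴 × 𝒵) => pX q.1 * W q.1 q.2)
          { q | D₁ < d₁ q.1 q.2.2.1 } ≤ ε₁ ∧
        prS (fun q : 𝒳 × (𝒰 × 𝒴 × 𝒵) => pX q.1 * W q.1 q.2)
          { q | D₂ < d₂ q.1 q.2.2.2 } ≤ ε₂ ∧
        ∀ δ₁ δ₂ : ℝ, δ₁ ∈ Set.Ioc (0:ℝ) 1 → δ₂ ∈ Set.Ioc (0:ℝ) 1 →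
          Iinf (fun q : 𝒳 × (𝒰 × 𝒴) =>
              pX q.1 * ∑' z, W q.1 (q.2.1, q.2.2, z)) δ₁
            + Real.log δ₁ ≤ Real.log m.1 ∧
          IinfCond (fun q : 𝒳 × 𝒵 × (𝒰 × 𝒴) =>
              pX q.1 * W q.1 (q.2.2.1, q.2.2.2, q.2.1)) δ₂
            + Real.log δ₂ ≤ Real.log m.2 } := by
  classical
  rintro ⟨M₁, M₂⟩ hm
  obtain ⟨hM₁pos, hM₂pos, hach⟩ := hm
  obtain ⟨C, hC₁, hC₂⟩ := hach
  obtain ⟨emb, hemb⟩ := hU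
  have hpsum : Summable pX := hpX.2.summable
  have hp0 := hpX.1
  have hptot : ∑' x, pX x = 1 := hpX.2.tsum_eq
  have hXne : Nonempty 𝒳 := by
    by_contra hne
    rw [not_nonempty_iff] at hne
    have h1 : (1:ℝ) = 0 := by
      refine hpX.2.unique ?_
      have hz : pX = fun _ => 0 := funext fun x => hne.elim x
      rw [hz]
      exact hasSum_zero
    norm_num at h1
  obtain ⟨x₀⟩ := hXne
  set g : Fin M₁ → 𝒳 := fun i => if h : ∃ x, C.f₁ x = i then h.choose else x₀ with hg_def
  have hg : ∀ i : Fin M₁, (∃ x, C.f₁ x = i) → C.f₁ (g i) = i := by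
    intro i hi
    rw [hg_def]
    simp only [dif_pos hi]
    exact hi.choose_spec
  set V : Fin M₁ → 𝒰 × 𝒴 := fun i => (emb (g i), C.φ₁ i) with hV_def
  have hVinj : ∀ i j : Fin M₁, (∃ x, C.f₁ x = i) → (∃ x, C.f₁ x = j) → V i = V j → i = j := by
    intro i j hi hj hV
    have h1 : emb (g i) = emb (g j) := by
      have h2 := congrArg Prod.fst hV
      simpa [hV_def] using h2
    have h2 : g i = g j := hemb h1
    rw [← hg i hi, ← hg j hj, h2]
  set v : 𝒳 → 𝒰 × 𝒴 := fun x => V (C.f₁ x) with hv_def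
  set Zf : 𝒳 → 𝒵 := fun x => C.φ₂ (C.f₁ x) (C.f₂ x) with hZ_def
  set w : 𝒳 → 𝒰 × 𝒴 × 𝒵 := fun x => ((v x).1, (v x).2, Zf x) with hw_def
  set W : 𝒳 → 𝒰 × 𝒴 × 𝒵 → ℝ := fun x t => if t = w x then 1 else 0 with hW_def
  have hw21 : ∀ x, (w x).2.1 = C.φ₁ (C.f₁ x) := by
    intro x; simp [hw_def, hv_def, hV_def]
  have hw22 : ∀ x, (w x).2.2 = C.φ₂ (C.f₁ x) (C.f₂ x) := by
    intro x; simp [hw_def, hZ_def]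
  refine ⟨W, ?_, ?_, ?_, ?_⟩
  · -- IsPmf
    intro x
    constructor
    · intro t
      simp only [hW_def]
      exact SR.ite_nonneg zero_le_one
    · simp only [hW_def]
      exact hasSum_ite_eq (w x) 1
  · -- prS 1
    have h1 : prS (fun q : 𝒳 × (𝒰 × 𝒴 × 𝒵) => pX q.1 * W q.1 q.2)
          { q : 𝒳 × (𝒰 × 𝒴 × 𝒵) | D₁ < d₁ q.1 q.2.2.1 }
        = prS pX { x | D₁ < d₁ x (C.φ₁ (C.f₁ x)) } := by
      unfold prS
      calc (∑' q : 𝒳 × (𝒰 × 𝒴 × 𝒵),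
              Set.indicator { q : 𝒳 × (𝒰 × 𝒴 × 𝒵) | D₁ < d₁ q.1 q.2.2.1 }
                (fun q => pX q.1 * W q.1 q.2) q)
          = ∑' q : 𝒳 × (𝒰 × 𝒴 × 𝒵),
              (if q.2 = w q.1 then (if D₁ < d₁ q.1 (C.φ₁ (C.f₁ q.1)) then pX q.1 else 0)
               else 0) := by
            refine tsum_congr fun q => ?_
            rw [Set.indicator_apply]
            simp only [Set.mem_setOf_eq, hW_def]
            by_cases hq : q.2 = w q.1
            · simp [hq, hw21 q.1]
            · simp [hq]
        _ = ∑' x, (if D₁ < d₁ x (C.φ₁ (C.f₁ x)) then pX x else 0) :=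
            SR.graph_tsum w (fun x => if D₁ < d₁ x (C.φ₁ (C.f₁ x)) then pX x else 0)
        _ = ∑' x, Set.indicator { x | D₁ < d₁ x (C.φ₁ (C.f₁ x)) } pX x := by
            refine tsum_congr fun x => ?_
            by_cases h : D₁ < d₁ x (C.φ₁ (C.f₁ x)) <;>
              simp [Set.indicator_apply, Set.mem_setOf_eq, h]
    rw [h1]
    exact hC₁
  · -- prS 2
    have h1 : prS (fun q : 𝒳 × (𝒰 × 𝒴 × 𝒵) => pX q.1 * W q.1 q.2)
          { q : 𝒳 × (𝒰 × 𝒴 × 𝒵) | D₂ < d₂ q.1 q.2.2.2 }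
        = prS pX { x | D₂ < d₂ x (C.φ₂ (C.f₁ x) (C.f₂ x)) } := by
      unfold prS
      calc (∑' q : 𝒳 × (𝒰 × 𝒴 × 𝒵),
              Set.indicator { q : 𝒳 × (𝒰 × 𝒴 × 𝒵) | D₂ < d₂ q.1 q.2.2.2 }
                (fun q => pX q.1 * W q.1 q.2) q)
          = ∑' q : 𝒳 × (𝒰 × 𝒴 × 𝒵),
              (if q.2 = w q.1 then
                (if D₂ < d₂ q.1 (C.φ₂ (C.f₁ q.1) (C.f₂ q.1)) then pX q.1 else 0)
               else 0) := by
            refine tsum_congr fun q => ?_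
            rw [Set.indicator_apply]
            simp only [Set.mem_setOf_eq, hW_def]
            by_cases hq : q.2 = w q.1
            · simp [hq, hw22 q.1]
            · simp [hq]
        _ = ∑' x, (if D₂ < d₂ x (C.φ₂ (C.f₁ x) (C.f₂ x)) then pX x else 0) :=
            SR.graph_tsum w
              (fun x => if D₂ < d₂ x (C.φ₂ (C.f₁ x) (C.f₂ x)) then pX x else 0)
        _ = ∑' x, Set.indicator { x | D₂ < d₂ x (C.φ₂ (C.f₁ x) (C.f₂ x)) } pX x := by
            refine tsum_congr fun x => ?_
            by_cases h : D₂ < d₂ x (C.φ₂ (C.f₁ x) (C.f₂ x)) <;>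
              simp [Set.indicator_apply, Set.mem_setOf_eq, h]
    rw [h1]
    exact hC₂
  · -- the information bounds
    intro δ₁ δ₂ hδ₁ hδ₂
    have hδ₁pos : (0:ℝ) < δ₁ := hδ₁.1
    have hδ₁le : δ₁ ≤ 1 := hδ₁.2
    have hδ₂pos : (0:ℝ) < δ₂ := hδ₂.1
    have hδ₂le : δ₂ ≤ 1 := hδ₂.2
    have hM₁R : (0:ℝ) < (M₁:ℝ) := by exact_mod_cast hM₁pos
    have hM₂R : (0:ℝ) < (M₂:ℝ) := by exact_mod_cast hM₂pos
    have hM₁R1 : (1:ℝ) ≤ (M₁:ℝ) := by exact_mod_cast hM₁pos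
    have hM₂R1 : (1:ℝ) ≤ (M₂:ℝ) := by exact_mod_cast hM₂pos
    set P' : 𝒰 × 𝒴 → ℝ := fun t => ∑' x, if t = v x then pX x else 0 with hP'_def
    have hP'nn : ∀ t, 0 ≤ P' t := by
      intro t
      rw [hP'_def]
      exact tsum_nonneg fun x => SR.ite_nonneg (hp0 x)
    set π₁ : 𝒳 × (𝒰 × 𝒴) → ℝ := fun q => if q.2 = v q.1 then pX q.1 else 0 with hπ₁_def
    set π₂ : 𝒳 × 𝒵 × (𝒰 × 𝒴) → ℝ :=
      fun q => if q.2 = (Zf q.1, v q.1) then pX q.1 else 0 with hπ₂_def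
    have hπ₂nn : ∀ q, 0 ≤ π₂ q := by
      intro q
      simp only [hπ₂_def]
      exact SR.ite_nonneg (hp0 q.1)
    have hm1 : ∀ x, margFst π₁ x = pX x := by
      intro x
      show (∑' t : 𝒰 × 𝒴, π₁ (x, t)) = pX x
      simp only [hπ₁_def]
      exact tsum_ite_eq (v x) (fun _ => pX x)
    have hm2 : ∀ t, margSnd π₁ t = P' t := by
      intro t
      show (∑' x, π₁ (x, t)) = P' t
      simp [hπ₁_def, hP'_def]
    have hA : ∀ (x : 𝒳) (t : 𝒰 × 𝒴),
        (∑' zc : 𝒵, π₂ (x, zc, t)) = if t = v x then pX x else 0 := by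
      intro x t
      have hpt : ∀ zc : 𝒵, π₂ (x, zc, t) = if (t = v x) ∧ zc = Zf x then pX x else 0 := by
        intro zc
        simp only [hπ₂_def]
        refine if_congr ?_ rfl rfl
        rw [Prod.mk.injEq]
        exact and_comm
      rw [tsum_congr hpt]
      exact SR.tsum_shift_ite (t = v x) (Zf x) (pX x)
    set N : 𝒵 → 𝒰 × 𝒴 → ℝ := fun zc t => ∑' x, π₂ (x, zc, t) with hN_def
    have hNa : ∀ zc t, (∑' x, π₂ (x, zc, t)) = N zc t := by
      intro zc t
      rw [hN_def]
    have hDen : ∀ t : 𝒰 × 𝒴, (∑' x, ∑' zc : 𝒵, π₂ (x, zc, t)) = P' t := by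
      intro t
      rw [tsum_congr (fun x => hA x t)]
    have hπ₂sum : ∀ zc t, Summable (fun x => π₂ (x, zc, t)) := by
      intro zc t
      refine (SR.summable_ite hpsum (fun x => (zc, t) = (Zf x, v x))).congr fun x => ?_
      simp [hπ₂_def]
    set fib : Fin M₁ → ℝ := fun i => ∑' x, if C.f₁ x = i then pX x else 0 with hfib_def
    have hfibnn : ∀ i, 0 ≤ fib i := by
      intro i
      rw [hfib_def]
      exact tsum_nonneg fun x => SR.ite_nonneg (hp0 x)
    have hfibsum : ∑ i : Fin M₁, fib i = 1 := by
      simp only [hfib_def]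
      rw [SR.tsum_fiber_eq hpsum C.f₁, hptot]
    have hPV_le : ∀ i : Fin M₁, fib i ≤ P' (V i) := by
      intro i
      simp only [hfib_def, hP'_def]
      refine Summable.tsum_le_tsum (fun x => ?_) (SR.summable_ite hpsum _) (SR.summable_ite hpsum _)
      by_cases h : C.f₁ x = i
      · have hvv : V i = v x := by simp [hv_def, ← h]
        rw [if_pos h, if_pos hvv]
      · rw [if_neg h]
        exact SR.ite_nonneg (hp0 x)
    have hPV_eq : ∀ i : Fin M₁, (∃ x, C.f₁ x = i) → P' (V i) = fib i := by
      intro i hi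
      simp only [hfib_def, hP'_def]
      refine tsum_congr fun x => ?_
      refine if_congr ?_ rfl rfl
      constructor
      · intro h
        have h2 : V i = V (C.f₁ x) := by simpa [hv_def] using h
        exact (hVinj i (C.f₁ x) hi ⟨x, rfl⟩ h2).symm
      · intro h
        simp [hv_def, ← h]
    constructor
    · -- first information bound
      set ψ₁ : 𝒳 × (𝒰 × 𝒴) → ℝ :=
        fun a => if δ₁/(M₁:ℝ) ≤ P' a.2 then 1 else 0 with hψ₁_def
      have hπstmt : (fun q : 𝒳 × (𝒰 × 𝒴) => pX q.1 * ∑' z, W q.1 (q.2.1, q.2.2, z)) = π₁ := by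
        funext q
        have hz : (∑' zc : 𝒵, W q.1 (q.2.1, q.2.2, zc)) = if q.2 = v q.1 then (1:ℝ) else 0 := by
          have hpt : ∀ zc : 𝒵, W q.1 (q.2.1, q.2.2, zc)
              = if (q.2 = v q.1) ∧ zc = Zf q.1 then (1:ℝ) else 0 := by
            intro zc
            simp only [hW_def]
            refine if_congr ?_ rfl rfl
            rw [hw_def]
            simp only [Prod.mk.injEq, Prod.ext_iff]
            tauto
          rw [tsum_congr hpt]
          exact SR.tsum_shift_ite (q.2 = v q.1) (Zf q.1) 1
        rw [hz]
        simp only [hπ₁_def, mul_ite, mul_one, mul_zero]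
      have key : Iinf (fun q : 𝒳 × (𝒰 × 𝒴) => pX q.1 * ∑' z, W q.1 (q.2.1, q.2.2, z)) δ₁
          ≤ Real.log ((M₁:ℝ)/δ₁) := by
        rw [show (fun q : 𝒳 × (𝒰 × 𝒴) => pX q.1 * ∑' z, W q.1 (q.2.1, q.2.2, z)) = π₁ from
          hπstmt]
        haveI : Nonempty (𝒳 × (𝒰 × 𝒴)) := ⟨(x₀, v x₀)⟩
        show Dinf π₁ (fun q : 𝒳 × (𝒰 × 𝒴) => margFst π₁ q.1 * margSnd π₁ q.2) δ₁ ≤ _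
        have hK1 : (1:ℝ) ≤ (M₁:ℝ)/δ₁ := by
          rw [le_div_iff₀ hδ₁pos]
          nlinarith
        refine SR.Dinf_le_of π₁ _ δ₁ ((M₁:ℝ)/δ₁) hK1 ψ₁ ?_ ?_ ?_ ?_
        · intro a
          constructor
          · simp only [hψ₁_def]
            exact SR.ite_nonneg zero_le_one
          · simp only [hψ₁_def]
            split <;> norm_num
        · -- constraint
          have hptws : ∀ a : 𝒳 × (𝒰 × 𝒴), ψ₁ a * π₁ a
              = if a.2 = v a.1 then
                  (if δ₁/(M₁:ℝ) ≤ P' (v a.1) then pX a.1 else 0) else 0 := by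
            intro a
            simp only [hψ₁_def, hπ₁_def]
            by_cases h : a.2 = v a.1
            · rw [h]
              by_cases h' : δ₁/(M₁:ℝ) ≤ P' (v a.1) <;> simp [h']
            · rw [if_neg h, if_neg h, mul_zero]
          rw [tsum_congr hptws,
            SR.graph_tsum v (fun x => if δ₁/(M₁:ℝ) ≤ P' (v x) then pX x else 0)]
          have hsplit : ∀ x, (if δ₁/(M₁:ℝ) ≤ P' (v x) then pX x else 0)
              = pX x - (if P' (v x) < δ₁/(M₁:ℝ) then pX x else 0) := by
            intro x
            rcases le_or_gt (δ₁/(M₁:ℝ)) (P' (v x)) with h | h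
            · rw [if_pos h, if_neg (not_lt.mpr h), sub_zero]
            · rw [if_neg (not_le.mpr h), if_pos h, sub_self]
          rw [tsum_congr hsplit, Summable.tsum_sub hpsum (SR.summable_ite hpsum _), hptot]
          have hbad : (∑' x, if P' (v x) < δ₁/(M₁:ℝ) then pX x else 0) ≤ δ₁ := by
            have hb := SR.fiber_bound hpsum hp0 C.f₁ (fun i => P' (V i) < δ₁/(M₁:ℝ))
              (fun _ => δ₁/(M₁:ℝ)) (fun _ => le_of_lt (div_pos hδ₁pos hM₁R))
              (fun i hqi => le_trans (hPV_le i) (le_of_lt hqi))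
            have heq : (∑' x, if P' (v x) < δ₁/(M₁:ℝ) then pX x else 0)
                = ∑' x, if P' (V (C.f₁ x)) < δ₁/(M₁:ℝ) then pX x else 0 := by
              refine tsum_congr fun x => ?_
              simp [hv_def]
            rw [heq]
            refine le_trans hb ?_
            rw [Finset.sum_const, Finset.card_univ, Fintype.card_fin, nsmul_eq_mul,
              mul_comm, div_mul_cancel₀ _ (ne_of_gt hM₁R)]
          linarith
        · -- sup bound
          intro a
          have hKpos : (0:ℝ) < (M₁:ℝ)/δ₁ := div_pos hM₁R hδ₁pos
          rw [hm1 a.1, hm2 a.2]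
          simp only [hψ₁_def, hπ₁_def]
          by_cases h1 : a.2 = v a.1
          · rw [if_pos h1]
            by_cases h2 : δ₁/(M₁:ℝ) ≤ P' a.2
            · rw [if_pos h2, one_mul]
              by_cases h3 : pX a.1 = 0
              · rw [h3, zero_div]
                exact hKpos.le
              · have hP'pos : 0 < P' a.2 := lt_of_lt_of_le (div_pos hδ₁pos hM₁R) h2
                rw [div_mul_eq_div_div, div_self h3]
                calc 1 / P' a.2 ≤ 1 / (δ₁/(M₁:ℝ)) :=
                      one_div_le_one_div_of_le (div_pos hδ₁pos hM₁R) h2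
                  _ = (M₁:ℝ)/δ₁ := one_div_div _ _
            · rw [if_neg h2, zero_mul, zero_div]
              exact hKpos.le
          · rw [if_neg h1, mul_zero, zero_div]
            exact hKpos.le
        · -- nonnegativity
          intro a
          rw [hm1 a.1, hm2 a.2]
          apply div_nonneg
          · apply mul_nonneg
            · simp only [hψ₁_def]
              exact SR.ite_nonneg zero_le_one
            · simp only [hπ₁_def]
              exact SR.ite_nonneg (hp0 a.1)
          · exact mul_nonneg (hp0 a.1) (hP'nn a.2)
      have hlog1 : Real.log ((M₁:ℝ)/δ₁) = Real.log (M₁:ℝ) - Real.log δ₁ :=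
        Real.log_div (ne_of_gt hM₁R) (ne_of_gt hδ₁pos)
      show Iinf _ δ₁ + Real.log δ₁ ≤ Real.log (M₁:ℝ)
      linarith
    · -- second information bound
      set ψ₂ : 𝒳 × 𝒵 × (𝒰 × 𝒴) → ℝ :=
        fun a => if δ₂/(M₂:ℝ) * P' a.2.2 ≤ N a.2.1 a.2.2 then 1 else 0 with hψ₂_def
      have hπstmt2 : (fun q : 𝒳 × 𝒵 × (𝒰 × 𝒴) =>
          pX q.1 * W q.1 (q.2.2.1, q.2.2.2, q.2.1)) = π₂ := by
        funext q
        simp only [hW_def, hπ₂_def, mul_ite, mul_one, mul_zero]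
        refine if_congr ?_ rfl rfl
        rw [hw_def]
        simp only [Prod.mk.injEq, Prod.ext_iff]
        tauto
      have key : IinfCond (fun q : 𝒳 × 𝒵 × (𝒰 × 𝒴) =>
          pX q.1 * W q.1 (q.2.2.1, q.2.2.2, q.2.1)) δ₂ ≤ Real.log ((M₂:ℝ)/δ₂) := by
        rw [show (fun q : 𝒳 × 𝒵 × (𝒰 × 𝒴) =>
          pX q.1 * W q.1 (q.2.2.1, q.2.2.2, q.2.1)) = π₂ from hπstmt2]
        haveI : Nonempty (𝒳 × 𝒵 × (𝒰 × 𝒴)) := ⟨(x₀, Zf x₀, v x₀)⟩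
        show Dinf π₂ (fun q : 𝒳 × 𝒵 × (𝒰 × 𝒴) => (∑' b, π₂ (q.1, b, q.2.2)) *
            ((∑' a, π₂ (a, q.2.1, q.2.2)) / (∑' a, ∑' b, π₂ (a, b, q.2.2)))) δ₂ ≤ _
        have hK2 : (1:ℝ) ≤ (M₂:ℝ)/δ₂ := by
          rw [le_div_iff₀ hδ₂pos]
          nlinarith
        refine SR.Dinf_le_of π₂ _ δ₂ ((M₂:ℝ)/δ₂) hK2 ψ₂ ?_ ?_ ?_ ?_
        · intro a
          constructor
          · simp only [hψ₂_def]
            exact SR.ite_nonneg zero_le_one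
          · simp only [hψ₂_def]
            split <;> norm_num
        · -- constraint
          have hptws : ∀ a : 𝒳 × 𝒵 × (𝒰 × 𝒴), ψ₂ a * π₂ a
              = if a.2 = (Zf a.1, v a.1) then
                  (if δ₂/(M₂:ℝ) * P' (v a.1) ≤ N (Zf a.1) (v a.1) then pX a.1 else 0)
                else 0 := by
            intro a
            simp only [hψ₂_def, hπ₂_def]
            by_cases h : a.2 = (Zf a.1, v a.1)
            · have e1 : a.2.1 = Zf a.1 := by rw [h]
              have e2 : a.2.2 = v a.1 := by rw [h]
              rw [e1, e2]
              by_cases h' : δ₂/(M₂:ℝ) * P' (v a.1) ≤ N (Zf a.1) (v a.1) <;> simp [h, h']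
            · rw [if_neg h, if_neg h, mul_zero]
          rw [tsum_congr hptws,
            SR.graph_tsum (fun x => (Zf x, v x))
              (fun x => if δ₂/(M₂:ℝ) * P' (v x) ≤ N (Zf x) (v x) then pX x else 0)]
          have hsplit : ∀ x, (if δ₂/(M₂:ℝ) * P' (v x) ≤ N (Zf x) (v x) then pX x else 0)
              = pX x - (if N (Zf x) (v x) < δ₂/(M₂:ℝ) * P' (v x) then pX x else 0) := by
            intro x
            rcases le_or_gt (δ₂/(M₂:ℝ) * P' (v x)) (N (Zf x) (v x)) with h | h
            · rw [if_pos h, if_neg (not_lt.mpr h), sub_zero]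
            · rw [if_neg (not_le.mpr h), if_pos h, sub_self]
          rw [tsum_congr hsplit, Summable.tsum_sub hpsum (SR.summable_ite hpsum _), hptot]
          have hbad : (∑' x, if N (Zf x) (v x) < δ₂/(M₂:ℝ) * P' (v x) then pX x else 0)
              ≤ δ₂ := by
            have hb2 : ∀ ij : Fin M₁ × Fin M₂,
                N (C.φ₂ ij.1 ij.2) (V ij.1) < δ₂/(M₂:ℝ) * P' (V ij.1) →
                (∑' x, if (C.f₁ x, C.f₂ x) = ij then pX x else 0)
                  ≤ δ₂/(M₂:ℝ) * fib ij.1 := by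
              rintro ⟨i, j⟩ hq
              by_cases hr : ∃ x, C.f₁ x = i
              · have hfle : (∑' x, if (C.f₁ x, C.f₂ x) = (i, j) then pX x else 0)
                    ≤ N (C.φ₂ i j) (V i) := by
                  rw [← hNa (C.φ₂ i j) (V i)]
                  refine Summable.tsum_le_tsum (fun x => ?_) (SR.summable_ite hpsum _) (hπ₂sum _ _)
                  by_cases h : (C.f₁ x, C.f₂ x) = (i, j)
                  · rw [if_pos h]
                    have h1 : C.f₁ x = i := congrArg Prod.fst h
                    have h2 : C.f₂ x = j := congrArg Prod.snd h
                    have hval : π₂ (x, C.φ₂ i j, V i) = pX x := by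
                      simp only [hπ₂_def]
                      rw [if_pos]
                      simp [hZ_def, hv_def, ← h1, ← h2]
                    rw [hval]
                  · rw [if_neg h]
                    exact hπ₂nn _
                calc (∑' x, if (C.f₁ x, C.f₂ x) = (i, j) then pX x else 0)
                    ≤ N (C.φ₂ i j) (V i) := hfle
                  _ ≤ δ₂/(M₂:ℝ) * P' (V i) := le_of_lt hq
                  _ = δ₂/(M₂:ℝ) * fib i := by rw [hPV_eq i hr]
              · have hzero : (∑' x, if (C.f₁ x, C.f₂ x) = (i, j) then pX x else 0) = 0 := by
                  have hz : ∀ x, (if (C.f₁ x, C.f₂ x) = (i, j) then pX x else 0) = 0 := by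
                    intro x
                    rw [if_neg]
                    intro h
                    exact hr ⟨x, congrArg Prod.fst h⟩
                  rw [tsum_congr hz, tsum_zero]
                rw [hzero]
                exact mul_nonneg (le_of_lt (div_pos hδ₂pos hM₂R)) (hfibnn i)
            have hb := SR.fiber_bound hpsum hp0 (fun x => (C.f₁ x, C.f₂ x))
              (fun ij => N (C.φ₂ ij.1 ij.2) (V ij.1) < δ₂/(M₂:ℝ) * P' (V ij.1))
              (fun ij => δ₂/(M₂:ℝ) * fib ij.1)
              (fun ij => mul_nonneg (le_of_lt (div_pos hδ₂pos hM₂R)) (hfibnn ij.1))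
              hb2
            have heq : (∑' x, if N (Zf x) (v x) < δ₂/(M₂:ℝ) * P' (v x) then pX x else 0)
                = ∑' x, if N (C.φ₂ (C.f₁ x) (C.f₂ x)) (V (C.f₁ x))
                    < δ₂/(M₂:ℝ) * P' (V (C.f₁ x)) then pX x else 0 := by
              refine tsum_congr fun x => ?_
              simp [hv_def, hZ_def]
            rw [heq]
            refine le_trans hb ?_
            rw [Fintype.sum_prod_type]
            have hrow : ∀ i : Fin M₁,
                (∑ _j : Fin M₂, δ₂/(M₂:ℝ) * fib i) = δ₂ * fib i := by
              intro i
              rw [Finset.sum_const, Finset.card_univ, Fintype.card_fin, nsmul_eq_mul,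
                ← mul_assoc, mul_comm ((M₂:ℝ)) (δ₂/(M₂:ℝ)), div_mul_cancel₀ _ (ne_of_gt hM₂R)]
            rw [Finset.sum_congr rfl (fun i _ => hrow i), ← Finset.mul_sum, hfibsum, mul_one]
          linarith
        · -- sup bound
          intro a
          have hKpos : (0:ℝ) < (M₂:ℝ)/δ₂ := div_pos hM₂R hδ₂pos
          rw [hA a.1 a.2.2, hNa a.2.1 a.2.2, hDen a.2.2]
          by_cases h1 : a.2 = (Zf a.1, v a.1)
          · have e1 : a.2.1 = Zf a.1 := by rw [h1]
            have e2 : a.2.2 = v a.1 := by rw [h1]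
            simp only [hψ₂_def, hπ₂_def]
            rw [e1, e2, if_pos h1, if_pos rfl]
            by_cases h2 : δ₂/(M₂:ℝ) * P' (v a.1) ≤ N (Zf a.1) (v a.1)
            · rw [if_pos h2, one_mul]
              by_cases h3 : pX a.1 = 0
              · rw [h3, zero_div]
                exact hKpos.le
              · have hpx : 0 < pX a.1 := lt_of_le_of_ne (hp0 a.1) (Ne.symm h3)
                have hP'ge : pX a.1 ≤ P' (v a.1) := by
                  have hle := Summable.le_tsum (SR.summable_ite hpsum (fun x => v a.1 = v x)) a.1
                    (fun b _ => SR.ite_nonneg (hp0 b))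
                  rw [hP'_def]
                  simpa using hle
                have hP'pos : 0 < P' (v a.1) := lt_of_lt_of_le hpx hP'ge
                have hNge : pX a.1 ≤ N (Zf a.1) (v a.1) := by
                  have hle := Summable.le_tsum (hπ₂sum (Zf a.1) (v a.1)) a.1 (fun b _ => hπ₂nn _)
                  rw [hNa (Zf a.1) (v a.1)] at hle
                  have hval : π₂ (a.1, Zf a.1, v a.1) = pX a.1 := by
                    simp [hπ₂_def]
                  rw [hval] at hle
                  exact hle
                have hNpos : 0 < N (Zf a.1) (v a.1) := lt_of_lt_of_le hpx hNge
                rw [div_mul_eq_div_div, div_self h3, one_div_div]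
                rw [div_le_div_iff₀ hNpos hδ₂pos]
                have h2' := mul_le_mul_of_nonneg_left h2 (le_of_lt hM₂R)
                have e : (M₂:ℝ) * (δ₂/(M₂:ℝ) * P' (v a.1)) = P' (v a.1) * δ₂ := by
                  field_simp
                linarith
            · rw [if_neg h2, zero_mul, zero_div]
              exact hKpos.le
          · simp only [hπ₂_def]
            rw [if_neg h1, mul_zero, zero_div]
            exact hKpos.le
        · -- nonnegativity
          intro a
          apply div_nonneg
          · apply mul_nonneg
            · simp only [hψ₂_def]
              exact SR.ite_nonneg zero_le_one
            · exact hπ₂nn a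
          · apply mul_nonneg
            · exact tsum_nonneg fun b => hπ₂nn _
            · refine div_nonneg (tsum_nonneg fun x => hπ₂nn _) ?_
              rw [hDen a.2.2]
              exact hP'nn a.2.2
      have hlog2 : Real.log ((M₂:ℝ)/δ₂) = Real.log (M₂:ℝ) - Real.log δ₂ :=
        Real.log_div (ne_of_gt hM₂R) (ne_of_gt hδ₂pos)
      show IinfCond _ δ₂ + Real.log δ₂ ≤ Real.log (M₂:ℝ)
      linarith
end
end

section
/- Let g : 𝒜 → ℬ × 𝒞 be a function between finite or countably infinite sets, and for c ∈ 𝒞 let ‖g‖_c denote the number of b ∈ ℬ such that g(a) = (b, c) for some a ∈ 𝒜. Let A be any random variable on 𝒜 and set (B, C) = g(A). Then for any δ ∈ (0, 1], log sup_{c ∈ 𝒞} ‖g‖_c ≥ I_∞^δ(A; B | C) + log δ. -/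
open scoped BigOperators
open Filter Topology

noncomputable section

open scoped ENNReal

namespace LogImageAux

variable {α β γ : Type*}

attribute [local instance] Classical.propDecidable

/-- The joint pmf of `(A, g(A))`. -/
def pi' (g : α → β × γ) (p : α → ℝ) : α × β × γ → ℝ :=
  Set.indicator {x : α × β × γ | g x.1 = (x.2.1, x.2.2)} fun x => p x.1

lemma pi'_apply (g : α → β × γ) (p : α → ℝ) (a : α) (b : β) (c : γ) :
    pi' g p (a, b, c) = if g a = (b, c) then p a else 0 := by
  by_cases h : g a = (b, c)
  · rw [if_pos h]
    exact Set.indicator_of_mem (show (a, b, c) ∈ {x : α × β × γ | g x.1 = (x.2.1, x.2.2)} from h) _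
  · rw [if_neg h]
    exact Set.indicator_of_notMem (show (a, b, c) ∉ {x : α × β × γ | g x.1 = (x.2.1, x.2.2)} from h) _

lemma pi'_nonneg (g : α → β × γ) (p : α → ℝ) (hp0 : ∀ a, 0 ≤ p a) (x : α × β × γ) :
    0 ≤ pi' g p x :=
  Set.indicator_nonneg (fun y _ => hp0 y.1) x

lemma hasSum_mul_pi' (g : α → β × γ) (p : α → ℝ) (w : β × γ → ℝ) {t : ℝ}
    (h : HasSum (fun a => w (g a) * p a) t) :
    HasSum (fun x : α × β × γ => w x.2 * pi' g p x) t := by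
  have he : Function.Injective (fun a : α => ((a, g a) : α × β × γ)) :=
    fun a a' h => congrArg Prod.fst h
  refine (he.hasSum_iff ?_).mp ?_
  · rintro ⟨a, b, c⟩ hx
    have hne : g a ≠ (b, c) := fun hh => hx ⟨a, show ((a, g a) : α × β × γ) = (a, b, c) by rw [hh]⟩
    simp [pi'_apply, hne]
  · convert h using 1
    funext a
    show w (g a) * pi' g p (a, (g a).1, (g a).2) = w (g a) * p a
    rw [pi'_apply, if_pos rfl]

lemma hasSum_pi' (g : α → β × γ) (p : α → ℝ) {t : ℝ} (hp1 : HasSum p t) :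
    HasSum (pi' g p) t := by
  have := hasSum_mul_pi' g p (fun _ => 1) (by simpa using hp1)
  simpa using this

/-- Marginal of `(B,C)`. -/
def Ffun (g : α → β × γ) (p : α → ℝ) (y : β × γ) : ℝ :=
  ∑' a : (g ⁻¹' {y} : Set α), p a

/-- Marginal of `C`. -/
def Gfun (g : α → β × γ) (p : α → ℝ) (c : γ) : ℝ :=
  ∑' a : (((fun a => (g a).2) ⁻¹' {c}) : Set α), p a

lemma tsum_pi'_fst (g : α → β × γ) (p : α → ℝ) (b : β) (c : γ) :
    (∑' a, pi' g p (a, b, c)) = Ffun g p (b, c) := by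
  rw [Ffun]
  rw [tsum_subtype]
  refine tsum_congr fun a => ?_
  rw [pi'_apply, Set.indicator_apply]
  simp [Set.mem_preimage]

lemma tsum_pi'_snd (g : α → β × γ) (p : α → ℝ) (a : α) (c : γ) :
    (∑' b, pi' g p (a, b, c)) = if (g a).2 = c then p a else 0 := by
  by_cases h : (g a).2 = c
  · subst h
    rw [if_pos rfl, tsum_eq_single (g a).1 ?_]
    · rw [pi'_apply, if_pos rfl]
    · intro b' hb'
      rw [pi'_apply, if_neg fun hh => hb' (congrArg Prod.fst hh).symm]
  · rw [if_neg h]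
    have h0 : ∀ b, pi' g p (a, b, c) = 0 := fun b => by
      rw [pi'_apply, if_neg fun hh => h (congrArg Prod.snd hh)]
    exact (tsum_congr h0).trans tsum_zero

lemma tsum_pi'_c (g : α → β × γ) (p : α → ℝ) (c : γ) :
    (∑' a, ∑' b, pi' g p (a, b, c)) = Gfun g p c := by
  rw [Gfun]
  rw [tsum_subtype]
  refine tsum_congr fun a => ?_
  rw [tsum_pi'_snd, Set.indicator_apply]
  simp [Set.mem_preimage]

lemma le_Ffun (g : α → β × γ) (p : α → ℝ) (hp0 : ∀ a, 0 ≤ p a) (hs : Summable p) (a : α) :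
    p a ≤ Ffun g p (g a) :=
  Summable.le_tsum (hs.subtype _) (⟨a, rfl⟩ : (g ⁻¹' {g a} : Set α)) fun a' _ => hp0 a'

lemma le_Gfun (g : α → β × γ) (p : α → ℝ) (hp0 : ∀ a, 0 ≤ p a) (hs : Summable p) (a : α) :
    p a ≤ Gfun g p (g a).2 :=
  Summable.le_tsum (hs.subtype _) (⟨a, rfl⟩ : (((fun a => (g a).2) ⁻¹' {(g a).2}) : Set α))
    fun a' _ => hp0 a'

lemma Ffun_nonneg (g : α → β × γ) (p : α → ℝ) (hp0 : ∀ a, 0 ≤ p a) (y : β × γ) :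
    0 ≤ Ffun g p y := tsum_nonneg fun a => hp0 a

lemma Gfun_nonneg (g : α → β × γ) (p : α → ℝ) (hp0 : ∀ a, 0 ≤ p a) (c : γ) :
    0 ≤ Gfun g p c := tsum_nonneg fun a => hp0 a

lemma hasSum_Ffun (g : α → β × γ) (p : α → ℝ) {t : ℝ} (hp1 : HasSum p t) :
    HasSum (Ffun g p) t := hp1.tsum_fiberwise g

lemma hasSum_Gfun (g : α → β × γ) (p : α → ℝ) {t : ℝ} (hp1 : HasSum p t) :
    HasSum (Gfun g p) t := hp1.tsum_fiberwise _

lemma Ffun_eq_zero (g : α → β × γ) (p : α → ℝ) {b : β} {c : γ}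
    (h : ¬∃ a, g a = (b, c)) : Ffun g p (b, c) = 0 := by
  have hemp : g ⁻¹' {(b, c)} = (∅ : Set α) := by
    ext a
    simp only [Set.mem_preimage, Set.mem_singleton_iff, Set.mem_empty_iff_false, iff_false]
    exact fun hh => h ⟨a, hh⟩
  rw [Ffun, hemp]
  exact tsum_empty

lemma tsum_if_le {S : Set β} (hS : S.Finite) (f : β → ℝ) (t : ℝ) (ht : 0 ≤ t)
    (hf0 : ∀ b, 0 ≤ f b) (hsupp : ∀ b ∉ S, f b = 0) (hft : ∀ b, f b ≤ t) :
    ∑' b, f b ≤ (hS.toFinset.card : ℝ) * t := by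
  rw [tsum_eq_sum (s := hS.toFinset)
    (fun b hb => hsupp b (by simpa [hS.mem_toFinset] using hb))]
  calc ∑ b ∈ hS.toFinset, f b ≤ ∑ _b ∈ hS.toFinset, t :=
        Finset.sum_le_sum fun b _ => hft b
    _ = (hS.toFinset.card : ℝ) * t := by rw [Finset.sum_const, nsmul_eq_mul]

lemma max_log_ciSup_le {ι : Type*} [Nonempty ι] (f : ι → ℝ) (t : ℝ) (h1 : 1 ≤ t)
    (h0 : ∀ i, 0 ≤ f i) (hle : ∀ i, f i ≤ t) :
    max 0 (Real.log (⨆ i, f i)) ≤ Real.log t := by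
  have hbdd : BddAbove (Set.range f) := ⟨t, by rintro y ⟨i, rfl⟩; exact hle i⟩
  have hsup_le : (⨆ i, f i) ≤ t := ciSup_le hle
  have hsup0 : 0 ≤ ⨆ i, f i :=
    le_trans (h0 (Classical.arbitrary ι)) (le_ciSup hbdd _)
  refine max_le (Real.log_nonneg h1) ?_
  rcases hsup0.eq_or_lt with h | h
  · rw [← h, Real.log_zero]; exact Real.log_nonneg h1
  · exact Real.log_le_log h hsup_le

end LogImageAux

/-- Lemma 4.  `(B,C) = g(A)`, so the joint pmf of `(A,B,C)`
puts mass `p a` on `(a, g a)`.  `‖g‖_c` is formalized as the extended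
cardinality of `{b | ∃ a, g a = (b,c)}`, the supremum and the logarithm being
taken in `ℝ≥0∞` and `EReal` respectively, so that infinite image sizes are
handled correctly. -/
theorem log_image_size_ge {α β γ : Type*} [Countable α] [Countable β] [Countable γ]
    (g : α → β × γ) (p : α → ℝ) (hp : IsPmf p)
    (δ : ℝ) (hδ : δ ∈ Set.Ioc (0:ℝ) 1) :
    ((IinfCond
        (Set.indicator {x : α × β × γ | g x.1 = (x.2.1, x.2.2)} fun x => p x.1) δ
      + Real.log δ : ℝ) : EReal) ≤
    ENNReal.log (⨆ c : γ, (Set.encard {b : β | ∃ a, g a = (b, c)} : ENNReal)) := by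
  classical
  obtain ⟨hδ0, hδ1⟩ := hδ
  obtain ⟨hp0, hp1⟩ := hp
  -- replace the indicator by `pi'` (definitional)
  show ((IinfCond (LogImageAux.pi' g p) δ + Real.log δ : ℝ) : EReal) ≤
    ENNReal.log (⨆ c : γ, (Set.encard {b : β | ∃ a, g a = (b, c)} : ENNReal))
  set Ksup : ℝ≥0∞ := ⨆ c : γ, (Set.encard {b : β | ∃ a, g a = (b, c)} : ENNReal)
    with hKsupdef
  by_cases hKtop : Ksup = ⊤
  · rw [hKtop, ENNReal.log_top]; exact le_top
  -- a point of `α`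
  have hα : Nonempty α := by
    by_contra h
    rw [not_nonempty_iff] at h
    exact one_ne_zero (hp1.unique hasSum_empty)
  obtain ⟨a₀⟩ := hα
  have hle : ∀ c : γ, (Set.encard {b : β | ∃ a, g a = (b, c)} : ℝ≥0∞) ≤ Ksup := by
    intro c; rw [hKsupdef]
    exact le_iSup (fun c : γ => (Set.encard {b : β | ∃ a, g a = (b, c)} : ℝ≥0∞)) c
  have h1K : (1 : ℝ≥0∞) ≤ Ksup := by
    refine le_trans ?_ (hle (g a₀).2)
    have h1 : (1 : ENat) ≤ Set.encard {b : β | ∃ a, g a = (b, (g a₀).2)} :=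
      Set.one_le_encard_iff_nonempty.mpr ⟨(g a₀).1, a₀, rfl⟩
    exact_mod_cast h1
  set K : ℝ := Ksup.toReal with hKdef
  have hK1 : 1 ≤ K := by rw [hKdef]; simpa using ENNReal.toReal_mono hKtop h1K
  have hK0 : (0:ℝ) < K := zero_lt_one.trans_le hK1
  set F := LogImageAux.Ffun g p with hFdef
  set G := LogImageAux.Gfun g p with hGdef
  have hF : HasSum F 1 := LogImageAux.hasSum_Ffun g p hp1
  have hG : HasSum G 1 := LogImageAux.hasSum_Gfun g p hp1
  have hF0 : ∀ y, 0 ≤ F y := LogImageAux.Ffun_nonneg g p hp0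
  have hG0 : ∀ c, 0 ≤ G c := LogImageAux.Gfun_nonneg g p hp0
  -- the weight `w` marking the "bad" pairs, and the test `ψ`
  set w : β × γ → ℝ := fun y => if K * F y < δ * G y.2 then 1 else 0 with hwdef
  have hw01 : ∀ y, 0 ≤ w y ∧ w y ≤ 1 := fun y => by
    simp only [hwdef]; split_ifs <;> norm_num
  have hwpsum : Summable (fun a => w (g a) * p a) := by
    refine Summable.of_nonneg_of_le (fun a => mul_nonneg (hw01 _).1 (hp0 a))
      (fun a => ?_) hp1.summable
    calc w (g a) * p a ≤ 1 * p a := mul_le_mul_of_nonneg_right (hw01 _).2 (hp0 a)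
      _ = p a := one_mul _
  set T : ℝ := ∑' a, w (g a) * p a with hTdef
  have hTsum0 : HasSum (fun a => w (g a) * p a) T := by
    rw [hTdef]; exact hwpsum.hasSum
  have hTfib : HasSum (fun y : β × γ => ∑' a : (g ⁻¹' {y} : Set α), w (g a) * p a) T :=
    hTsum0.tsum_fiberwise g
  have hfibval : ∀ y : β × γ,
      (∑' a : (g ⁻¹' {y} : Set α), w (g a) * p a) = w y * F y := by
    intro y
    have h1 : ∀ a : (g ⁻¹' {y} : Set α), w (g (a : α)) * p a = w y * p a := by
      intro a; rw [show g (a : α) = y from a.2]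
    rw [tsum_congr h1, tsum_mul_left, hFdef]
    rfl
  have hTsum : HasSum (fun y : β × γ => w y * F y) T := by
    have h := hTfib
    rw [show (fun y : β × γ => ∑' a : (g ⁻¹' {y} : Set α), w (g a) * p a)
          = fun y => w y * F y from funext hfibval] at h
    exact h
  have hwF_nonneg : ∀ y : β × γ, 0 ≤ w y * F y := fun y =>
    mul_nonneg (hw01 y).1 (hF0 y)
  -- finiteness of the image sets
  have hSc : ∀ c : γ, {b : β | ∃ a, g a = (b, c)}.Finite := by
    intro c
    have h2 : (Set.encard {b : β | ∃ a, g a = (b, c)} : ℝ≥0∞) ≠ ⊤ :=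
      ne_top_of_le_ne_top hKtop (hle c)
    have h3 : Set.encard {b : β | ∃ a, g a = (b, c)} ≠ ⊤ := by
      intro h; rw [h] at h2; simp at h2
    rw [← Set.encard_lt_top_iff]
    exact lt_top_iff_ne_top.mpr h3
  have hcard : ∀ c : γ, (((hSc c).toFinset.card : ℝ)) ≤ K := by
    intro c
    have h1 := hle c
    rw [(hSc c).encard_eq_coe_toFinset_card] at h1
    have h2 := ENNReal.toReal_mono hKtop h1
    rw [hKdef]
    simpa using h2
  -- the key per-`c` bound
  have hkey : ∀ c : γ, (∑' b, w (b, c) * F (b, c)) ≤ δ * G c := by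
    intro c
    have hb1 : ∀ b, w (b, c) * F (b, c) ≤ δ / K * G c := by
      intro b
      by_cases hbad : K * F (b, c) < δ * G c
      · have hw1 : w (b, c) = 1 := by simp only [hwdef]; rw [if_pos hbad]
        rw [hw1, one_mul, div_mul_eq_mul_div, le_div_iff₀ hK0, mul_comm (F (b, c)) K]
        exact hbad.le
      · have hw0 : w (b, c) = 0 := by simp only [hwdef]; rw [if_neg hbad]
        rw [hw0, zero_mul]
        exact mul_nonneg (div_nonneg hδ0.le hK0.le) (hG0 c)
    have hsupp : ∀ b ∉ {b : β | ∃ a, g a = (b, c)}, w (b, c) * F (b, c) = 0 := by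
      intro b hb
      have hFz : F (b, c) = 0 := by
        rw [hFdef]; exact LogImageAux.Ffun_eq_zero g p hb
      rw [hFz, mul_zero]
    calc (∑' b, w (b, c) * F (b, c))
        ≤ (((hSc c).toFinset.card : ℝ)) * (δ / K * G c) :=
          LogImageAux.tsum_if_le (hSc c) _ _
            (mul_nonneg (div_nonneg hδ0.le hK0.le) (hG0 c))
            (fun b => hwF_nonneg _) hsupp hb1
      _ ≤ K * (δ / K * G c) := mul_le_mul_of_nonneg_right (hcard c)
            (mul_nonneg (div_nonneg hδ0.le hK0.le) (hG0 c))
      _ = δ * G c := by field_simp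
  -- summing over `c` : the total bad mass is at most `δ`
  have hwFsum : Summable (fun y : β × γ => w y * F y) := hTsum.summable
  have hs2 : Summable (fun z : γ × β => w (z.2, z.1) * F (z.2, z.1)) :=
    (Equiv.prodComm γ β).summable_iff.mpr hwFsum
  have hinner : Summable (fun c : γ => ∑' b, w (b, c) * F (b, c)) := hs2.prod
  have hswap : (∑' y : β × γ, w y * F y) = ∑' c, ∑' b, w (b, c) * F (b, c) := by
    calc (∑' y : β × γ, w y * F y)
        = ∑' z : γ × β, w (z.2, z.1) * F (z.2, z.1) :=
          ((Equiv.prodComm γ β).tsum_eq (fun y : β × γ => w y * F y)).symm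
      _ = ∑' c, ∑' b, w (b, c) * F (b, c) := Summable.tsum_prod' hs2 hs2.prod_factor
  have hTle : T ≤ δ := by
    calc T = ∑' y : β × γ, w y * F y := hTsum.tsum_eq.symm
      _ = ∑' c, ∑' b, w (b, c) * F (b, c) := hswap
      _ ≤ ∑' c, δ * G c := Summable.tsum_le_tsum hkey hinner (hG.summable.mul_left δ)
      _ = δ * ∑' c, G c := tsum_mul_left
      _ = δ := by rw [hG.tsum_eq, mul_one]
  -- the test function
  set ψ : α × β × γ → ℝ := fun x => if K * F x.2 < δ * G x.2.2 then 0 else 1 with hψdef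
  have hπ1 : HasSum (LogImageAux.pi' g p) 1 := LogImageAux.hasSum_pi' g p hp1
  have hbadPi : HasSum (fun x : α × β × γ => w x.2 * LogImageAux.pi' g p x) T :=
    LogImageAux.hasSum_mul_pi' g p w hTsum0
  have hpsisum : HasSum (fun x : α × β × γ => ψ x * LogImageAux.pi' g p x) (1 - T) := by
    have h := hπ1.sub hbadPi
    have heq : (fun x : α × β × γ => LogImageAux.pi' g p x - w x.2 * LogImageAux.pi' g p x)
        = fun x => ψ x * LogImageAux.pi' g p x := by
      funext x
      simp only [hψdef, hwdef]
      split_ifs <;> ring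
    rw [heq] at h
    exact h
  -- rewrite the right-hand side logarithm
  have hK0' : Ksup ≠ 0 := (zero_lt_one.trans_le h1K).ne'
  have hlog : ENNReal.log Ksup = ((Real.log K : ℝ) : EReal) := by
    rw [hKdef]
    simp only [ENNReal.log, if_neg hK0', if_neg hKtop]
  rw [hlog, EReal.coe_le_coe_iff]
  have hKd1 : 1 ≤ K / δ := (one_le_div hδ0).mpr (hδ1.trans hK1)
  suffices h : IinfCond (LogImageAux.pi' g p) δ ≤ Real.log (K / δ) by
    rw [Real.log_div hK0.ne' hδ0.ne'] at h
    linarith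
  rw [IinfCond, Dinf]
  -- bounds on the likelihood-ratio terms
  have hub : ∀ x : α × β × γ,
      ψ x * LogImageAux.pi' g p x /
        ((∑' b, LogImageAux.pi' g p (x.1, b, x.2.2)) *
          ((∑' a, LogImageAux.pi' g p (a, x.2.1, x.2.2)) /
            (∑' a, ∑' b, LogImageAux.pi' g p (a, b, x.2.2)))) ≤ K / δ := by
    rintro ⟨a, b, c⟩
    rw [LogImageAux.tsum_pi'_snd g p a c, LogImageAux.tsum_pi'_fst g p b c,
      LogImageAux.tsum_pi'_c g p c, ← hFdef, ← hGdef]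
    simp only [hψdef]
    by_cases hbad : K * F (b, c) < δ * G c
    · rw [if_pos hbad, zero_mul, zero_div]
      exact div_nonneg hK0.le hδ0.le
    · rw [if_neg hbad, one_mul]
      by_cases hz : LogImageAux.pi' g p (a, b, c) = 0
      · rw [hz, zero_div]; exact div_nonneg hK0.le hδ0.le
      · rw [LogImageAux.pi'_apply] at hz ⊢
        by_cases hga : g a = (b, c)
        · rw [if_pos hga] at hz ⊢
          have hpa : 0 < p a := (hp0 a).lt_of_ne (Ne.symm hz)
          have hgc : (g a).2 = c := congrArg Prod.snd hga
          rw [if_pos hgc]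
          have hFge : p a ≤ F (b, c) := by
            rw [hFdef, ← hga]; exact LogImageAux.le_Ffun g p hp0 hp1.summable a
          have hGge : p a ≤ G c := by
            rw [hGdef, ← hgc]; exact LogImageAux.le_Gfun g p hp0 hp1.summable a
          have hFpos : 0 < F (b, c) := hpa.trans_le hFge
          have hGpos : 0 < G c := hpa.trans_le hGge
          have hQpos : 0 < p a * (F (b, c) / G c) := mul_pos hpa (div_pos hFpos hGpos)
          rw [div_le_div_iff₀ hQpos hδ0]
          have h2 : δ * G c ≤ K * F (b, c) := not_lt.mp hbad
          rw [show K * (p a * (F (b, c) / G c)) = p a * (K * F (b, c)) / G c from by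
            field_simp, le_div_iff₀ hGpos]
          calc p a * δ * G c = p a * (δ * G c) := by ring
            _ ≤ p a * (K * F (b, c)) := mul_le_mul_of_nonneg_left h2 (hp0 a)
        · rw [if_neg hga] at hz; exact absurd rfl hz
  have hub0 : ∀ x : α × β × γ,
      0 ≤ ψ x * LogImageAux.pi' g p x /
        ((∑' b, LogImageAux.pi' g p (x.1, b, x.2.2)) *
          ((∑' a, LogImageAux.pi' g p (a, x.2.1, x.2.2)) /
            (∑' a, ∑' b, LogImageAux.pi' g p (a, b, x.2.2)))) := by
    intro x
    have hψ0 : 0 ≤ ψ x := by simp only [hψdef]; split_ifs <;> norm_num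
    refine div_nonneg (mul_nonneg hψ0 (LogImageAux.pi'_nonneg g p hp0 x)) ?_
    refine mul_nonneg (tsum_nonneg fun b => LogImageAux.pi'_nonneg g p hp0 _) ?_
    exact div_nonneg (tsum_nonneg fun a => LogImageAux.pi'_nonneg g p hp0 _)
      (tsum_nonneg fun a => tsum_nonneg fun b => LogImageAux.pi'_nonneg g p hp0 _)
  haveI : Nonempty (α × β × γ) := ⟨(a₀, g a₀)⟩
  refine csInf_le_of_le ⟨0, ?_⟩ ⟨ψ, fun x => ?_, ?_, rfl⟩
    (LogImageAux.max_log_ciSup_le _ _ hKd1 hub0 hub)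
  · rintro d ⟨ψ', -, -, rfl⟩
    exact le_max_left _ _
  · constructor
    · simp only [hψdef]; split_ifs <;> norm_num
    · simp only [hψdef]; split_ifs <;> norm_num
  · rw [hpsisum.tsum_eq]
    linarith
end
end

section
/- For a triple of random variables (A, B, C) on finite or countably infinite sets 𝒜 × ℬ × 𝒞 with ℬ finite, and any δ ∈ (0, 1], it holds that I_∞^δ(A; B | C) ≤ log |ℬ| − log δ. -/
open scoped BigOperators
open Filter Topology

noncomputable section

/-- Auxiliary marginals for the proof of `iinf_cond_le_log_card`. -/
def pBCm {α β γ : Type*} (π : α × β × γ → ℝ) (b : β) (c : γ) : ℝ := ∑' a, π (a, b, c)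

def pCm {α β γ : Type*} (π : α × β × γ → ℝ) (c : γ) : ℝ := ∑' a, ∑' b, π (a, b, c)

def pACm {α β γ : Type*} (π : α × β × γ → ℝ) (a : α) (c : γ) : ℝ := ∑' b, π (a, b, c)

/-- The reference measure in the definition of `IinfCond`. -/
def Qm {α β γ : Type*} (π : α × β × γ → ℝ) : α × β × γ → ℝ :=
  fun x => pACm π x.1 x.2.2 * (pBCm π x.2.1 x.2.2 / pCm π x.2.2)

open Classical in
/-- The smoothing test function. -/
def psim {α β γ : Type*} (π : α × β × γ → ℝ) (K : ℝ) : α × β × γ → ℝ :=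
  fun x => if π x ≤ K * Qm π x then 1 else 0

open Classical in
/-- The removed ("bad") part of the mass. -/
def gm {α β γ : Type*} (π : α × β × γ → ℝ) (K : ℝ) : α × β × γ → ℝ :=
  fun x => if π x ≤ K * Qm π x then 0 else π x

open Classical in
/-- A pointwise upper bound for `gm`. -/
def um {α β γ : Type*} (π : α × β × γ → ℝ) (D : ℝ) : α × β × γ → ℝ :=
  fun x => if pBCm π x.2.1 x.2.2 < D * pCm π x.2.2 then π x else 0

def eCAB {α β γ : Type*} : (α × β × γ) ≃ γ × α × β :=
  ⟨fun x => (x.2.2, x.1, x.2.1), fun y => (y.2.1, y.2.2, y.1), fun _ => rfl, fun _ => rfl⟩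

def eBCA {α β γ : Type*} : (α × β × γ) ≃ (β × γ) × α :=
  ⟨fun x => ((x.2.1, x.2.2), x.1), fun y => (y.2, y.1.1, y.1.2), fun _ => rfl, fun _ => rfl⟩

theorem Dinf_le_of {α : Type*} (P Q : α → ℝ) (δ t : ℝ) (ψ : α → ℝ)
    (hψ : ∀ a, 0 ≤ ψ a ∧ ψ a ≤ 1) (hsum : 1 - δ ≤ ∑' a, ψ a * P a)
    (ht : max 0 (Real.log (⨆ a, ψ a * P a / Q a)) ≤ t) : Dinf P Q δ ≤ t := by
  refine le_trans (csInf_le ⟨0, ?_⟩ ⟨ψ, hψ, hsum, rfl⟩) ht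
  rintro d ⟨ψ', -, -, rfl⟩
  exact le_max_left _ _

/-- Remark 4.  For a triple `(A,B,C)` with joint pmf `π` and
`ℬ` finite, `I_∞^δ(A;B|C) ≤ log |ℬ| − log δ`. -/
theorem iinf_cond_le_log_card {α β γ : Type*}
    [Countable α] [Fintype β] [Countable γ]
    (π : α × β × γ → ℝ) (hπ : IsPmf π)
    (δ : ℝ) (hδ : δ ∈ Set.Ioc (0:ℝ) 1) :
    IinfCond π δ ≤ Real.log (Fintype.card β) - Real.log δ := by
  classical
  obtain ⟨hδ0, hδ1⟩ := hδ
  obtain ⟨h0, h1⟩ := hπ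
  have hs : Summable π := h1.summable
  have hne : Nonempty (α × β × γ) := by
    by_contra h
    rw [not_nonempty_iff] at h
    have : (1 : ℝ) = 0 := by rw [← h1.tsum_eq, tsum_empty]
    norm_num at this
  have hβ : Nonempty β := ⟨hne.some.2.1⟩
  set B : ℝ := (Fintype.card β : ℝ) with hBdef
  have hB1 : (1 : ℝ) ≤ B := by
    have : 1 ≤ Fintype.card β := Fintype.card_pos
    rw [hBdef]
    exact_mod_cast this
  have hB0 : (0 : ℝ) < B := lt_of_lt_of_le one_pos hB1
  have hK1 : (1 : ℝ) ≤ B / δ := by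
    rw [le_div_iff₀ hδ0, one_mul]; exact hδ1.trans hB1
  have hK0 : (0 : ℝ) < B / δ := lt_of_lt_of_le one_pos hK1
  have hD0 : (0 : ℝ) < δ / B := div_pos hδ0 hB0
  -- basic facts
  have hQ0 : ∀ x, 0 ≤ Qm π x := fun x =>
    mul_nonneg (tsum_nonneg fun _ => h0 _)
      (div_nonneg (tsum_nonneg fun _ => h0 _) (tsum_nonneg fun _ => tsum_nonneg fun _ => h0 _))
  have sA : ∀ (b : β) (c : γ), Summable fun a => π (a, b, c) := fun b c =>
    hs.comp_injective (fun a₁ a₂ h => by simpa using congrArg Prod.fst h)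
  have sAB : ∀ c, Summable fun p : α × β => π (p.1, p.2, c) := fun c =>
    hs.comp_injective (i := fun p : α × β => (p.1, p.2, c)) (fun p q h => by
      have h1 := congrArg Prod.fst h
      have h2 := congrArg (fun x : α × β × γ => x.2.1) h
      exact Prod.ext h1 h2)
  have hπ_le_pAC : ∀ a b c, π (a, b, c) ≤ pACm π a c := fun a b c =>
    Summable.le_tsum (f := fun b' => π (a, b', c)) Summable.of_finite b fun _ _ => h0 _
  have hπ_le_pBC : ∀ a b c, π (a, b, c) ≤ pBCm π b c := fun a b c =>
    Summable.le_tsum (sA b c) a fun _ _ => h0 _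
  have hpBC_nonneg : ∀ b c, 0 ≤ pBCm π b c := fun b c => tsum_nonneg fun _ => h0 _
  have hpC_nonneg : ∀ c, 0 ≤ pCm π c := fun c => tsum_nonneg fun _ => tsum_nonneg fun _ => h0 _
  have hpC_sum : ∀ c, pCm π c = ∑ b, pBCm π b c := by
    intro c
    calc pCm π c = ∑' a, ∑ b, π (a, b, c) := tsum_congr fun a => tsum_fintype _
      _ = ∑ b, ∑' a, π (a, b, c) := Summable.tsum_finsetSum fun b _ => sA b c
  have hpBC_le_pC : ∀ b c, pBCm π b c ≤ pCm π c := by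
    intro b c
    rw [hpC_sum c]
    exact Finset.single_le_sum (fun b' _ => hpBC_nonneg b' c) (Finset.mem_univ b)
  -- total mass of pCm
  have hs1 : Summable fun y : γ × α × β => π (y.2.1, y.2.2, y.1) :=
    ((eCAB (α := α) (β := β) (γ := γ)).symm.summable_iff (f := π)).mpr hs
  have htot1 : ∑' y : γ × α × β, π (y.2.1, y.2.2, y.1) = 1 := by
    calc ∑' y : γ × α × β, π (y.2.1, y.2.2, y.1) = ∑' x, π x :=
          (eCAB (α := α) (β := β) (γ := γ)).symm.tsum_eq π
      _ = 1 := h1.tsum_eq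
  have hpC_eq : ∀ c, pCm π c = ∑' p : α × β, π (p.1, p.2, c) := fun c =>
    (Summable.tsum_prod' (sAB c) fun _ => Summable.of_finite).symm
  have hsum_pC : Summable (pCm π) := by
    have h2 := (summable_prod_of_nonneg
      (f := fun y : γ × α × β => π (y.2.1, y.2.2, y.1)) (fun y => h0 _)).1 hs1
    exact h2.2.congr fun c => (hpC_eq c).symm
  have htotC : ∑' c, pCm π c = 1 := by
    calc ∑' c, pCm π c = ∑' c, ∑' p : α × β, π (p.1, p.2, c) := tsum_congr hpC_eq
      _ = ∑' y : γ × α × β, π (y.2.1, y.2.2, y.1) := (Summable.tsum_prod' hs1 fun c => sAB c).symm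
      _ = 1 := htot1
  -- the key pointwise estimate
  have key : ∀ a b c, B / δ * Qm π (a, b, c) < π (a, b, c) →
      pBCm π b c < δ / B * pCm π c := by
    intro a b c h
    have hπx : 0 < π (a, b, c) := lt_of_le_of_lt (mul_nonneg hK0.le (hQ0 _)) h
    have hpac : 0 < pACm π a c := lt_of_lt_of_le hπx (hπ_le_pAC a b c)
    have hpbc : 0 < pBCm π b c := lt_of_lt_of_le hπx (hπ_le_pBC a b c)
    have hpc : 0 < pCm π c := lt_of_lt_of_le hpbc (hpBC_le_pC b c)
    have h2 : B / δ * (pACm π a c * (pBCm π b c / pCm π c)) < pACm π a c :=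
      lt_of_lt_of_le h (hπ_le_pAC a b c)
    have h3 : B / δ * (pBCm π b c / pCm π c) < 1 := by
      have h2' : pACm π a c * (B / δ * (pBCm π b c / pCm π c)) < pACm π a c * 1 := by
        rw [mul_one]
        calc pACm π a c * (B / δ * (pBCm π b c / pCm π c))
            = B / δ * (pACm π a c * (pBCm π b c / pCm π c)) := by ring
          _ < pACm π a c := h2
      exact (mul_lt_mul_iff_right₀ hpac).mp h2'
    have h4 : B / δ * pBCm π b c < pCm π c := by
      rw [← mul_div_assoc] at h3
      exact (div_lt_one hpc).mp h3
    have h5 : δ / B * (B / δ * pBCm π b c) < δ / B * pCm π c :=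
      mul_lt_mul_of_pos_left h4 hD0
    have h6 : δ / B * (B / δ * pBCm π b c) = pBCm π b c := by
      field_simp
    rw [h6] at h5
    exact h5
  -- summabilities of gm and um
  have hg_nonneg : ∀ x, 0 ≤ gm π (B / δ) x := by
    intro x; unfold gm; split <;> simp [h0 x]
  have hg_le : ∀ x, gm π (B / δ) x ≤ π x := by
    intro x; unfold gm; split
    · exact h0 x
    · exact le_refl _
  have hu_nonneg : ∀ x, 0 ≤ um π (δ / B) x := by
    intro x; unfold um; split <;> simp [h0 x]
  have hu_le : ∀ x, um π (δ / B) x ≤ π x := by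
    intro x; unfold um; split
    · exact le_refl _
    · exact h0 x
  have hsg : Summable (gm π (B / δ)) := Summable.of_nonneg_of_le hg_nonneg hg_le hs
  have hsu : Summable (um π (δ / B)) := Summable.of_nonneg_of_le hu_nonneg hu_le hs
  -- gm ≤ um pointwise
  have hg_le_u : ∀ x, gm π (B / δ) x ≤ um π (δ / B) x := by
    rintro ⟨a, b, c⟩
    by_cases hc : π (a, b, c) ≤ B / δ * Qm π (a, b, c)
    · calc gm π (B / δ) (a, b, c) = 0 := if_pos hc
        _ ≤ um π (δ / B) (a, b, c) := hu_nonneg _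
    · have hcond := key a b c (lt_of_not_ge hc)
      calc gm π (B / δ) (a, b, c) = π (a, b, c) := if_neg hc
        _ ≤ um π (δ / B) (a, b, c) := le_of_eq (if_pos hcond).symm
  -- sum of um is at most δ
  have hsu' : Summable fun y : (β × γ) × α => um π (δ / B) (eBCA.symm y) :=
    (eBCA.symm.summable_iff (f := um π (δ / B))).mpr hsu
  have hinner : ∀ p : β × γ, (∑' a, um π (δ / B) (eBCA.symm (p, a)))
      = if pBCm π p.1 p.2 < δ / B * pCm π p.2 then pBCm π p.1 p.2 else 0 := by
    intro p
    by_cases hc : pBCm π p.1 p.2 < δ / B * pCm π p.2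
    · rw [if_pos hc]
      calc (∑' a, um π (δ / B) (eBCA.symm (p, a)))
          = ∑' a, π (a, p.1, p.2) := tsum_congr fun a => if_pos hc
        _ = pBCm π p.1 p.2 := rfl
    · rw [if_neg hc]
      calc (∑' a, um π (δ / B) (eBCA.symm (p, a)))
          = ∑' a, (0 : ℝ) := tsum_congr fun a => if_neg hc
        _ = 0 := tsum_zero
  have hsum_pC2 : Summable fun p : β × γ => pCm π p.2 := by
    refine (summable_prod_of_nonneg (fun p => hpC_nonneg _)).2 ⟨fun b => hsum_pC, ?_⟩
    exact Summable.of_finite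
  have hsumLHS : Summable fun p : β × γ =>
      (if pBCm π p.1 p.2 < δ / B * pCm π p.2 then pBCm π p.1 p.2 else 0 : ℝ) := by
    have h2 := (summable_prod_of_nonneg
      (f := fun y : (β × γ) × α => um π (δ / B) (eBCA.symm y)) (fun y => hu_nonneg _)).1 hsu'
    exact h2.2.congr hinner
  have hsum_u_le : ∑' x, um π (δ / B) x ≤ δ := by
    have e1 : ∑' x, um π (δ / B) x = ∑' y : (β × γ) × α, um π (δ / B) (eBCA.symm y) :=
      (eBCA.symm.tsum_eq (um π (δ / B))).symm
    have e2 : ∑' y : (β × γ) × α, um π (δ / B) (eBCA.symm y)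
        = ∑' p : β × γ, ∑' a, um π (δ / B) (eBCA.symm (p, a)) :=
      Summable.tsum_prod' hsu' fun p => hsu'.prod_factor p
    have e3 : (∑' p : β × γ, ∑' a, um π (δ / B) (eBCA.symm (p, a)))
        = ∑' p : β × γ, (if pBCm π p.1 p.2 < δ / B * pCm π p.2 then pBCm π p.1 p.2 else 0 : ℝ) :=
      tsum_congr hinner
    have e4 : (∑' p : β × γ, (if pBCm π p.1 p.2 < δ / B * pCm π p.2
          then pBCm π p.1 p.2 else 0 : ℝ))
        ≤ ∑' p : β × γ, δ / B * pCm π p.2 := by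
      refine Summable.tsum_le_tsum ?_ hsumLHS (hsum_pC2.mul_left _)
      intro p
      split
      · next hc => exact le_of_lt hc
      · exact mul_nonneg hD0.le (hpC_nonneg _)
    have e5 : (∑' p : β × γ, δ / B * pCm π p.2) = δ := by
      rw [tsum_mul_left]
      have : (∑' p : β × γ, pCm π p.2) = ∑' b : β, ∑' c, pCm π c :=
        Summable.tsum_prod' hsum_pC2 fun b => hsum_pC
      rw [this]
      have : (∑' _b : β, (1 : ℝ)) = B := by
        rw [tsum_fintype]
        simp [hBdef]
      rw [show (∑' b : β, ∑' c, pCm π c) = ∑' _b : β, (1 : ℝ) from tsum_congr fun b => htotC,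
        this]
      field_simp
    rw [e1, e2, e3]
    rw [e5] at e4
    exact e4
  -- lower bound on the mass kept by psim
  have hpsi_mul : ∀ x, psim π (B / δ) x * π x = π x - gm π (B / δ) x := by
    intro x
    unfold psim gm
    split
    · rw [one_mul, sub_zero]
    · rw [zero_mul, sub_self]
  have hmass : 1 - δ ≤ ∑' x, psim π (B / δ) x * π x := by
    have : (∑' x, psim π (B / δ) x * π x) = (∑' x, π x) - ∑' x, gm π (B / δ) x := by
      rw [← Summable.tsum_sub hs hsg]
      exact tsum_congr hpsi_mul
    rw [this, h1.tsum_eq]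
    have hgu : (∑' x, gm π (B / δ) x) ≤ ∑' x, um π (δ / B) x := Summable.tsum_le_tsum hg_le_u hsg hsu
    have : (∑' x, gm π (B / δ) x) ≤ δ := hgu.trans hsum_u_le
    linarith
  -- the sup bound
  have hsup_le : (⨆ x, psim π (B / δ) x * π x / Qm π x) ≤ B / δ := by
    refine Real.iSup_le (fun x => ?_) hK0.le
    by_cases hc : π x ≤ B / δ * Qm π x
    · rw [show psim π (B / δ) x = 1 from if_pos hc, one_mul]
      rcases (hQ0 x).eq_or_lt with hq | hq
      · rw [← hq, div_zero]; exact hK0.le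
      · rw [div_le_iff₀ hq]
        exact hc
    · rw [show psim π (B / δ) x = 0 from if_neg hc, zero_mul, zero_div]
      exact hK0.le
  have hsup0 : 0 ≤ ⨆ x, psim π (B / δ) x * π x / Qm π x := by
    refine Real.iSup_nonneg fun x => ?_
    refine div_nonneg (mul_nonneg ?_ (h0 x)) (hQ0 x)
    unfold psim; split <;> norm_num
  -- put everything together
  refine Dinf_le_of π (Qm π) δ _ (psim π (B / δ)) (fun x => ?_) hmass ?_
  · constructor
    · unfold psim; split <;> norm_num
    · unfold psim; split <;> norm_num
  · rw [← Real.log_div (ne_of_gt hB0) (ne_of_gt hδ0)]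
    refine max_le (Real.log_nonneg hK1) ?_
    rcases hsup0.eq_or_lt with h | h
    · rw [← h, Real.log_zero]
      exact Real.log_nonneg hK1
    · exact Real.log_le_log h hsup_le
end
end
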